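/- arXiv:1702.00980 — 6 statements merged into one kernel-verified Lean document; each statement's English description precedes it below -/
import Mathlib

section
/- Over the max-plus semiring, for all n×n matrices A, B over ℝ_max the tropical adjoint satisfies adj(A⊙B) ≥ adj(B) ⊙ adj(A) entrywise. -/
open Matrix

noncomputable section

/-- The max-plus semiring `ℝ_max = ℝ ∪ {−∞}`: addition is `max` (the lattice `⊔`),
multiplication is `+` with `⊥ = −∞` absorbing. -/
abbrev Rmax : Type := WithBot ℝ

/-- Tropical matrix product: `(A ⊙ B) i j = max_t (A i t + B t j)`. -/
def tropMul {l m p : Type*} [Fintype m] (A : Matrix l m Rmax) (B : Matrix m p Rmax) :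
    Matrix l p Rmax :=
  Matrix.of fun i j => Finset.univ.sup fun t => A i t + B t j

/-- The tropical identity matrix: `0` on the diagonal, `−∞` elsewhere. -/
def tropId (m : Type*) [DecidableEq m] : Matrix m m Rmax :=
  Matrix.of fun i j => if i = j then (0 : Rmax) else ⊥

/-- Tropical permanent: maximum over permutations of the sum of the selected entries. -/
def tropPer {m : Type*} [Fintype m] [DecidableEq m] (A : Matrix m m Rmax) : Rmax :=
  Finset.univ.sup fun σ : Equiv.Perm m => ∑ i, A i (σ i)

/-- Tropical trace: maximum of the diagonal entries. -/
def tropTrace {m : Type*} [Fintype m] (A : Matrix m m Rmax) : Rmax :=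
  Finset.univ.sup fun i => A i i

/-- The type of `k`-element subsets of `{1,…,n}`. -/
abbrev KSub (n k : ℕ) : Type := {I : Finset (Fin n) // I.card = k}

/-- The `k`-th compound matrix: indexed by `k`-element subsets; the `(I,J)` entry is the
maximum over bijections `σ : I → J` of `∑_{i ∈ I} A i (σ i)`. -/
def compound {n : ℕ} (k : ℕ) (A : Matrix (Fin n) (Fin n) Rmax) :
    Matrix (KSub n k) (KSub n k) Rmax :=
  Matrix.of fun I J =>
    Finset.univ.sup fun σ : {x // x ∈ I.1} ≃ {x // x ∈ J.1} =>
      ∑ i : {x // x ∈ I.1}, A i.1 (σ i).1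

/-- Tropical adjoint: `adj(A) i j = per(A_{(j,i)})`, deleting row `j` and column `i`. -/
def tropAdj {n : ℕ} (A : Matrix (Fin (n+1)) (Fin (n+1)) Rmax) :
    Matrix (Fin (n+1)) (Fin (n+1)) Rmax :=
  Matrix.of fun i j => tropPer (A.submatrix j.succAbove i.succAbove)

/-- Quasi-inverse `A^∇` of a nonsingular matrix: `(A^∇) i j = adj(A) i j − per(A)`. -/
def tropQInv {n : ℕ} (A : Matrix (Fin (n+1)) (Fin (n+1)) Rmax) :
    Matrix (Fin (n+1)) (Fin (n+1)) Rmax :=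
  Matrix.of fun i j => tropAdj A i j + ((- ((tropPer A).unbotD 0) : ℝ) : Rmax)

/-- A matrix over `ℝ_max` is invertible iff it is a monomial (generalized permutation) matrix. -/
def IsMonomial {n : ℕ} (A : Matrix (Fin n) (Fin n) Rmax) : Prop :=
  ∃ (π : Equiv.Perm (Fin n)) (d : Fin n → ℝ),
    ∀ i j, A i j = if j = π i then ((d i : ℝ) : Rmax) else ⊥

/-- `m`-fold tropical power of a square matrix (`A^{⊙0}` is the tropical identity). -/
def tropPow {m : Type*} [Fintype m] [DecidableEq m] (A : Matrix m m Rmax) : ℕ → Matrix m m Rmax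
  | 0 => tropId m
  | k + 1 => tropMul (tropPow A k) A

/-- `adj(A⊙B) ≥ adj(B) ⊙ adj(A)` entrywise. -/
theorem tropAdj_mul_ge {n : ℕ} (A B : Matrix (Fin (n+1)) (Fin (n+1)) Rmax)
    (i j : Fin (n+1)) :
    tropMul (tropAdj B) (tropAdj A) i j ≤ tropAdj (tropMul A B) i j := by
  show (Finset.univ.sup fun t => tropAdj B i t + tropAdj A t j) ≤ _
  refine Finset.sup_le fun t _ => ?_
  unfold tropAdj tropPer tropMul
  simp only [Matrix.of_apply, Matrix.submatrix_apply]
  obtain ⟨τ, -, hτ⟩ := Finset.exists_mem_eq_sup Finset.univ Finset.univ_nonempty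
    (fun σ : Equiv.Perm (Fin n) => ∑ k, B (t.succAbove k) (i.succAbove (σ k)))
  obtain ⟨ρ, -, hρ⟩ := Finset.exists_mem_eq_sup Finset.univ Finset.univ_nonempty
    (fun σ : Equiv.Perm (Fin n) => ∑ k, A (j.succAbove k) (t.succAbove (σ k)))
  rw [hτ, hρ]
  refine le_trans ?_ (Finset.le_sup (f := fun σ : Equiv.Perm (Fin n) =>
    ∑ k, Finset.univ.sup fun s => A (j.succAbove k) s + B s (i.succAbove (σ k)))
    (Finset.mem_univ (ρ.trans τ)))
  have h : (∑ k, B (t.succAbove k) (i.succAbove (τ k)))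
      = ∑ k, B (t.succAbove (ρ k)) (i.succAbove (τ (ρ k))) :=
    (Equiv.sum_comp ρ fun k => B (t.succAbove k) (i.succAbove (τ k))).symm
  rw [h, add_comm, ← Finset.sum_add_distrib]
  refine Finset.sum_le_sum fun k _ => ?_
  exact Finset.le_sup (f := fun s => A (j.succAbove k) s + B s (i.succAbove ((ρ.trans τ) k)))
    (Finset.mem_univ (t.succAbove (ρ k)))
end
end

section
/- Tropical Jacobi identity for invertible matrices over the max-plus semiring: if A is an invertible (monomial) n×n matrix over ℝ_max, then for every k with 1 ≤ k ≤ n−1 and all k-element subsets I, J of {1,…,n}, one has per(A) + (A^{−1})^{∧(n−k)}_{J^c, I^c} = A^{∧k}_{I,J}, where I^c, J^c denote complements in {1,…,n} and the sum is in ℝ ∪ {−∞} with −∞ absorbing. -/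
open Matrix

noncomputable section

lemma sum_eq_bot {α} (s : Finset α) (f : α → Rmax) (i0 : α) (h0 : i0 ∈ s) (h : f i0 = ⊥) :
    ∑ i ∈ s, f i = ⊥ := by
  classical
  rw [← Finset.add_sum_erase s f h0, h, WithBot.bot_add]

lemma sup_eq_of_unique {α} [Fintype α] (f : α → Rmax) (t0 : α)
    (h : ∀ t, t ≠ t0 → f t = ⊥) : Finset.univ.sup f = f t0 := by
  apply le_antisymm
  · apply Finset.sup_le
    intro t _
    rcases eq_or_ne t t0 with rfl | ht
    · exact le_rfl
    · simp [h t ht]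
  · exact Finset.le_sup (Finset.mem_univ t0)

lemma tropPer_monomial {n : ℕ} (M : Matrix (Fin n) (Fin n) Rmax)
    (p : Equiv.Perm (Fin n)) (e : Fin n → ℝ)
    (hM : ∀ i j, M i j = if j = p i then ((e i : ℝ) : Rmax) else ⊥) :
    tropPer M = ((∑ i, e i : ℝ) : Rmax) := by
  unfold tropPer
  rw [sup_eq_of_unique _ p]
  · simp only [hM, if_pos rfl]
    push_cast
    ring
  · intro σ hσ
    have : ∃ i, σ i ≠ p i := by
      by_contra hc
      push_neg at hc
      exact hσ (Equiv.ext hc)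
    obtain ⟨i, hi⟩ := this
    exact sum_eq_bot _ _ i (Finset.mem_univ i) (by simp [hM, hi])

lemma compound_monomial {n k : ℕ} (M : Matrix (Fin n) (Fin n) Rmax)
    (p : Equiv.Perm (Fin n)) (e : Fin n → ℝ)
    (hM : ∀ i j, M i j = if j = p i then ((e i : ℝ) : Rmax) else ⊥)
    (I J : KSub n k) :
    compound k M I J =
      if J.1 = I.1.image p then ((∑ i ∈ I.1, e i : ℝ) : Rmax) else ⊥ := by
  classical
  split_ifs with h
  · have hmem : ∀ x : Fin n, x ∈ I.1 ↔ p x ∈ J.1 := by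
      intro x
      rw [h]
      simp only [Finset.mem_image]
      exact ⟨fun hx => ⟨x, hx, rfl⟩, fun ⟨a, ha, hax⟩ => (p.injective hax) ▸ ha⟩
    let σ0 : {x // x ∈ I.1} ≃ {x // x ∈ J.1} := p.subtypeEquiv hmem
    have hσ0 : ∀ i : {x // x ∈ I.1}, ((σ0 i) : Fin n) = p i.1 := fun i => rfl
    show Finset.univ.sup _ = _
    rw [sup_eq_of_unique _ σ0]
    · have hterm : ∀ i : {x // x ∈ I.1}, M i.1 (σ0 i).1 = ((e i.1 : ℝ) : Rmax) := by
        intro i; rw [hσ0, hM, if_pos rfl]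
      rw [Finset.sum_congr rfl fun i _ => hterm i]
      push_cast
      exact Finset.sum_coe_sort I.1 fun i => ((e i : ℝ) : Rmax)
    · intro σ hσ
      have : ∃ i, σ i ≠ σ0 i := by
        by_contra hc
        push_neg at hc
        exact hσ (Equiv.ext hc)
      obtain ⟨i, hi⟩ := this
      have hi' : ((σ i) : Fin n) ≠ p i.1 := by
        rw [← hσ0]
        exact fun hc => hi (Subtype.ext hc)
      exact sum_eq_bot _ _ i (Finset.mem_univ i) (by simp [hM, hi'])
  · show Finset.univ.sup _ = ⊥
    rw [Finset.sup_eq_bot_iff]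
    intro σ _
    have hex : ∃ i : {x // x ∈ I.1}, ((σ i) : Fin n) ≠ p i.1 := by
      by_contra hc
      push_neg at hc
      apply h
      ext j
      constructor
      · intro hj
        refine Finset.mem_image.mpr ⟨(σ.symm ⟨j, hj⟩ : Fin n), (σ.symm ⟨j, hj⟩).2, ?_⟩
        rw [← hc (σ.symm ⟨j, hj⟩), Equiv.apply_symm_apply]
      · intro hj
        obtain ⟨a, ha, hap⟩ := Finset.mem_image.mp hj
        rw [← hap, ← hc ⟨a, ha⟩]
        exact (σ ⟨a, ha⟩).2
    obtain ⟨i, hi⟩ := hex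
    exact sum_eq_bot _ _ i (Finset.mem_univ i) (by simp [hM, hi])

/-- Tropical Jacobi identity for invertible (monomial) matrices:
`per(A) + (A^{−1})^{∧(n−k)}_{Jᶜ,Iᶜ} = A^{∧k}_{I,J}`. -/
theorem tropical_jacobi_of_monomial {n : ℕ} (A Ainv : Matrix (Fin n) (Fin n) Rmax)
    (hA : IsMonomial A)
    (h1 : tropMul A Ainv = tropId (Fin n))
    (h2 : tropMul Ainv A = tropId (Fin n))
    (k : ℕ) (hk1 : 1 ≤ k) (hk2 : k ≤ n - 1)
    (I J : KSub n k) :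
    tropPer A +
        compound (n - k) Ainv
          ⟨J.1ᶜ, by simp [Finset.card_compl, J.2]⟩
          ⟨I.1ᶜ, by simp [Finset.card_compl, I.2]⟩
      = compound k A I J := by
  classical
  obtain ⟨π, d, hAd⟩ := hA
  have key : ∀ s j, ((d (π.symm s) : ℝ) : Rmax) + Ainv s j
      = if π.symm s = j then (0 : Rmax) else ⊥ := by
    intro s j
    have hh := congrFun (congrFun h1 (π.symm s)) j
    simp only [tropMul, tropId, Matrix.of_apply] at hh
    rw [sup_eq_of_unique _ s (fun t ht => by
      rw [hAd, if_neg (by simpa using ht), WithBot.bot_add])] at hh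
    rw [hAd, if_pos (by simp)] at hh
    exact hh
  have hAinv : ∀ s t, Ainv s t =
      if t = π.symm s then (((-(d (π.symm s))) : ℝ) : Rmax) else ⊥ := by
    intro s t
    rcases eq_or_ne t (π.symm s) with heq | ht
    · rw [if_pos heq]
      have hk := key s t
      rw [if_pos heq.symm] at hk
      cases hx : Ainv s t with
      | none => rw [hx, WithBot.none_eq_bot, WithBot.add_bot] at hk; exact absurd hk (by simp)
      | some y =>
        rw [hx, WithBot.some_eq_coe, ← WithBot.coe_add] at hk
        have hy : d (π.symm s) + y = 0 := by exact_mod_cast hk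
        rw [WithBot.some_eq_coe, WithBot.coe_inj]
        linarith
    · rw [if_neg ht]
      have hk := key s t
      rw [if_neg (fun hc => ht hc.symm)] at hk
      rcases WithBot.add_eq_bot.mp hk with hc | hc
      · exact absurd hc (by simp)
      · exact hc
  rw [tropPer_monomial A π d hAd, compound_monomial A π d hAd,
    compound_monomial Ainv π.symm (fun s => -(d (π.symm s))) hAinv]
  have hmem1 : ∀ (S : Finset (Fin n)) (x : Fin n), x ∈ S.image ⇑π.symm ↔ π x ∈ S := by
    intro S x
    rw [Finset.mem_image]
    constructor
    · rintro ⟨a, ha, rfl⟩; simpa using ha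
    · intro hx; exact ⟨π x, hx, by simp⟩
  have hmem2 : ∀ (S : Finset (Fin n)) (x : Fin n), x ∈ S.image ⇑π ↔ π.symm x ∈ S := by
    intro S x
    rw [Finset.mem_image]
    constructor
    · rintro ⟨a, ha, rfl⟩; simpa using ha
    · intro hx; exact ⟨π.symm x, hx, by simp⟩
  have hcond : I.1ᶜ = J.1ᶜ.image ⇑π.symm ↔ J.1 = I.1.image ⇑π := by
    constructor
    · intro hc
      have hIJ : ∀ x, x ∈ I.1 ↔ π x ∈ J.1 := by
        intro x
        have h1' : x ∈ I.1ᶜ ↔ x ∈ J.1ᶜ.image ⇑π.symm := by rw [hc]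
        rw [hmem1, Finset.mem_compl, Finset.mem_compl] at h1'
        exact not_iff_not.mp h1'
      ext j
      rw [hmem2]
      simpa using (hIJ (π.symm j)).symm
    · intro hc
      have hIJ : ∀ x, x ∈ J.1 ↔ π.symm x ∈ I.1 := by
        intro x
        rw [hc, hmem2]
      ext x
      rw [hmem1, Finset.mem_compl, Finset.mem_compl]
      rw [not_iff_not]
      simpa using (hIJ (π x)).symm
  by_cases hJ : J.1 = I.1.image ⇑π
  · rw [if_pos hJ, if_pos (hcond.mpr hJ)]
    have hs : ∑ j ∈ J.1ᶜ, -(d (π.symm j)) = ∑ i ∈ I.1ᶜ, -(d i) := by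
      rw [hcond.mpr hJ, Finset.sum_image (fun a _ b _ h => π.symm.injective h)]
    rw [← WithBot.coe_add, WithBot.coe_inj, hs]
    have hsplit := Finset.sum_add_sum_compl I.1 d
    have : ∑ i ∈ I.1ᶜ, -(d i) = -∑ i ∈ I.1ᶜ, d i := by rw [Finset.sum_neg_distrib]
    rw [this]
    linarith
  · rw [if_neg hJ, if_neg (fun hc => hJ (hcond.mp hc)), WithBot.add_bot]
end
end

section
/- Over the max-plus semiring, let A be an n×n matrix over ℝ_max such that A_{i,i} = 0 for all i and A⊙A = A (so A equals its own Kleene star A*). Then for every k with 1 ≤ k ≤ n−1 and all k-element subsets I, J of {1,…,n}, one has A^{∧(n−k)}_{J^c, I^c} = A^{∧k}_{I,J}, where I^c, J^c denote complements in {1,…,n}. -/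
open Matrix

noncomputable section

namespace TropAux

variable {n : ℕ}

/-- weight of a set of arcs -/
def mw (A : Matrix (Fin n) (Fin n) Rmax) (G : Finset (Fin n × Fin n)) : Rmax :=
  ∑ p ∈ G, A p.1 p.2

/-- partial matching: distinct first coords, distinct second coords -/
def IsM (G : Finset (Fin n × Fin n)) : Prop :=
  (∀ p ∈ G, ∀ q ∈ G, p.1 = q.1 → p = q) ∧ (∀ p ∈ G, ∀ q ∈ G, p.2 = q.2 → p = q)

lemma IsM.subset {G H : Finset (Fin n × Fin n)} (h : IsM H) (hs : G ⊆ H) : IsM G :=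
  ⟨fun p hp q hq => h.1 p (hs hp) q (hs hq), fun p hp q hq => h.2 p (hs hp) q (hs hq)⟩

lemma image_fst_erase {G : Finset (Fin n × Fin n)} (hM : IsM G) {p} (hp : p ∈ G) :
    (G.erase p).image Prod.fst = (G.image Prod.fst).erase p.1 := by
  ext a
  simp only [Finset.mem_image, Finset.mem_erase]
  constructor
  · rintro ⟨r, ⟨rne, rG⟩, rfl⟩
    exact ⟨fun h => rne (hM.1 r rG p hp h), r, rG, rfl⟩
  · rintro ⟨ane, r, rG, rfl⟩
    exact ⟨r, ⟨fun h => ane (by rw [h]), rG⟩, rfl⟩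

lemma image_snd_erase {G : Finset (Fin n × Fin n)} (hM : IsM G) {p} (hp : p ∈ G) :
    (G.erase p).image Prod.snd = (G.image Prod.snd).erase p.2 := by
  ext a
  simp only [Finset.mem_image, Finset.mem_erase]
  constructor
  · rintro ⟨r, ⟨rne, rG⟩, rfl⟩
    exact ⟨fun h => rne (hM.2 r rG p hp h), r, rG, rfl⟩
  · rintro ⟨ane, r, rG, rfl⟩
    exact ⟨r, ⟨fun h => ane (by rw [h]), rG⟩, rfl⟩

lemma mw_erase (A : Matrix (Fin n) (Fin n) Rmax) {G : Finset (Fin n × Fin n)}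
    {p : Fin n × Fin n} (hp : p ∈ G) : mw A G = mw A (G.erase p) + A p.1 p.2 := by
  rw [mw, mw, ← Finset.sum_erase_add G (fun r => A r.1 r.2) hp]

lemma mw_insert (A : Matrix (Fin n) (Fin n) Rmax) {G : Finset (Fin n × Fin n)}
    {p : Fin n × Fin n} (hp : p ∉ G) : mw A (insert p G) = A p.1 p.2 + mw A G := by
  rw [mw, mw, Finset.sum_insert hp]

lemma erase_sdiff_erase {F S : Finset (Fin n)} {j : Fin n} (hjF : j ∈ F) (hjS : j ∈ S) :
    F.erase j \ S.erase j = F \ S := by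
  ext a
  by_cases h : a = j
  · subst h; simp [hjF, hjS]
  · simp [Finset.mem_sdiff, Finset.mem_erase, h]

/-- The core surgery lemma: any matching can be replaced by one with
source `F \ S` and target `S \ F`, without decreasing the weight. -/
lemma core (A : Matrix (Fin n) (Fin n) Rmax)
    (hdiag : ∀ i, A i i = 0)
    (htrans : ∀ i t j, A i t + A t j ≤ A i j) :
    ∀ (m : ℕ) (G : Finset (Fin n × Fin n)), IsM G → G.card ≤ m →
      ∃ H, IsM H ∧ H.image Prod.fst = G.image Prod.fst \ G.image Prod.snd ∧
        H.image Prod.snd = G.image Prod.snd \ G.image Prod.fst ∧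
        mw A G ≤ mw A H := by
  intro m
  induction m with
  | zero =>
    intro G hM hc
    have : G = ∅ := Finset.card_eq_zero.mp (Nat.le_zero.mp hc)
    subst this
    exact ⟨∅, ⟨by simp, by simp⟩, by simp, by simp, le_rfl⟩
  | succ m ih =>
    intro G hM hc
    by_cases hdisj : Disjoint (G.image Prod.fst) (G.image Prod.snd)
    · refine ⟨G, hM, ?_, ?_, le_rfl⟩
      · rw [Finset.sdiff_eq_self_iff_disjoint.mpr hdisj]
      · rw [Finset.sdiff_eq_self_iff_disjoint.mpr hdisj.symm]
    · obtain ⟨j, hjF, hjS⟩ := Finset.not_disjoint_iff.mp hdisj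
      obtain ⟨p, hp, hpj⟩ := Finset.mem_image.mp hjF
      obtain ⟨q, hq, hqj⟩ := Finset.mem_image.mp hjS
      by_cases hpq : p = q
      · -- p = q = (j,j): drop it
        subst hpq
        set G' := G.erase p with hG'
        have hM' : IsM G' := hM.subset (Finset.erase_subset _ _)
        have hcard : G'.card ≤ m := by
          rw [hG', Finset.card_erase_of_mem hp]; omega
        obtain ⟨H, hMH, hHF, hHS, hle⟩ := ih G' hM' hcard
        have hF' : G'.image Prod.fst = (G.image Prod.fst).erase j := by
          rw [hG', image_fst_erase hM hp, hpj]
        have hS' : G'.image Prod.snd = (G.image Prod.snd).erase j := by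
          rw [hG', image_snd_erase hM hp, hqj]
        have hw : mw A G = mw A G' := by
          have e1 : mw A G = mw A G' + A p.1 p.2 := mw_erase A hp
          have hpp : A p.1 p.2 = 0 := by
            have h2 : p.2 = p.1 := hqj.trans hpj.symm
            rw [h2]; exact hdiag p.1
          rw [e1, hpp, add_zero]
        refine ⟨H, hMH, ?_, ?_, hw ▸ hle⟩
        · rw [hHF, hF', hS', erase_sdiff_erase hjF hjS]
        · rw [hHS, hF', hS', erase_sdiff_erase hjS hjF]
      · -- shortcut at j
        have hqne : q ≠ p := fun h => hpq h.symm
        have hbj : p.2 ≠ j := fun h => hpq (hM.2 p hp q hq (h.trans hqj.symm))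
        have haj : q.1 ≠ j := fun h => hpq (hM.1 p hp q hq (hpj.trans h.symm))
        have hrG : (q.1, p.2) ∉ G := by
          intro h
          have h2 : (q.1, p.2) = q := hM.1 _ h q hq rfl
          exact hbj ((congrArg Prod.snd h2).trans hqj)
        have hq' : q ∈ G.erase p := Finset.mem_erase.mpr ⟨hqne, hq⟩
        have hG''sub : (G.erase p).erase q ⊆ G := fun r hr =>
          Finset.erase_subset _ _ (Finset.erase_subset _ _ hr)
        have hrG'' : (q.1, p.2) ∉ (G.erase p).erase q := fun h => hrG (hG''sub h)
        have hM' : IsM (insert (q.1, p.2) ((G.erase p).erase q)) := by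
          constructor
          · intro x hx y hy hxy
            rcases Finset.mem_insert.mp hx with rfl | hx' <;>
              rcases Finset.mem_insert.mp hy with h | hy'
            · rw [h]
            · have : y = q := hM.1 y (hG''sub hy') q hq hxy.symm
              exact absurd this (Finset.mem_erase.mp hy').1
            · have : x = q := hM.1 x (hG''sub hx') q hq (by rw [hxy, h])
              exact absurd this (Finset.mem_erase.mp hx').1
            · exact hM.1 x (hG''sub hx') y (hG''sub hy') hxy
          · intro x hx y hy hxy
            rcases Finset.mem_insert.mp hx with rfl | hx' <;>
              rcases Finset.mem_insert.mp hy with h | hy'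
            · rw [h]
            · have : y = p := hM.2 y (hG''sub hy') p hp hxy.symm
              exact absurd this (Finset.mem_erase.mp (Finset.mem_erase.mp hy').2).1
            · have : x = p := hM.2 x (hG''sub hx') p hp (by rw [hxy, h])
              exact absurd this (Finset.mem_erase.mp (Finset.mem_erase.mp hx').2).1
            · exact hM.2 x (hG''sub hx') y (hG''sub hy') hxy
        have hMep : IsM (G.erase p) := hM.subset (Finset.erase_subset _ _)
        have hF'' : ((G.erase p).erase q).image Prod.fst
            = ((G.image Prod.fst).erase j).erase q.1 := by
          rw [image_fst_erase hMep hq', image_fst_erase hM hp, hpj]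
        have hS'' : ((G.erase p).erase q).image Prod.snd
            = ((G.image Prod.snd).erase j).erase p.2 := by
          rw [image_snd_erase hMep hq', image_snd_erase hM hp, hqj, Finset.erase_right_comm]
        have haF : q.1 ∈ (G.image Prod.fst).erase j :=
          Finset.mem_erase.mpr ⟨haj, Finset.mem_image_of_mem Prod.fst hq⟩
        have hbS : p.2 ∈ (G.image Prod.snd).erase j :=
          Finset.mem_erase.mpr ⟨hbj, Finset.mem_image_of_mem Prod.snd hp⟩
        have hF' : (insert (q.1, p.2) ((G.erase p).erase q)).image Prod.fst
            = (G.image Prod.fst).erase j := by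
          rw [Finset.image_insert, hF'']
          exact Finset.insert_erase haF
        have hS' : (insert (q.1, p.2) ((G.erase p).erase q)).image Prod.snd
            = (G.image Prod.snd).erase j := by
          rw [Finset.image_insert, hS'']
          exact Finset.insert_erase hbS
        have hcard : (insert (q.1, p.2) ((G.erase p).erase q)).card ≤ m := by
          rw [Finset.card_insert_of_notMem hrG'',
            Finset.card_erase_of_mem hq', Finset.card_erase_of_mem hp]
          have : 2 ≤ G.card := Finset.one_lt_card.mpr ⟨p, hp, q, hq, hpq⟩
          omega
        have hw : mw A G ≤ mw A (insert (q.1, p.2) ((G.erase p).erase q)) := by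
          have e1 : mw A G = mw A (G.erase p) + A p.1 p.2 := mw_erase A hp
          have e2 : mw A (G.erase p) = mw A ((G.erase p).erase q) + A q.1 q.2 :=
            mw_erase A hq'
          have e3 : mw A (insert (q.1, p.2) ((G.erase p).erase q))
              = A q.1 p.2 + mw A ((G.erase p).erase q) := mw_insert A hrG''
          calc mw A G = mw A ((G.erase p).erase q) + A q.1 q.2 + A p.1 p.2 := by
                rw [e1, e2]
            _ = mw A ((G.erase p).erase q) + (A q.1 j + A j p.2) := by
                rw [hpj, hqj, add_assoc]
            _ ≤ mw A ((G.erase p).erase q) + A q.1 p.2 :=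
                add_le_add_right (htrans q.1 j p.2) _
            _ = mw A (insert (q.1, p.2) ((G.erase p).erase q)) := by
                rw [e3, add_comm]
        obtain ⟨H, hMH, hHF, hHS, hle⟩ := ih _ hM' hcard
        refine ⟨H, hMH, ?_, ?_, le_trans hw hle⟩
        · rw [hHF, hF', hS', erase_sdiff_erase hjF hjS]
        · rw [hHS, hF', hS', erase_sdiff_erase hjS hjF]

lemma equiv_to_matching (A : Matrix (Fin n) (Fin n) Rmax) (X Y : Finset (Fin n))
    (σ : {x // x ∈ X} ≃ {x // x ∈ Y}) :
    ∃ G, IsM G ∧ G.image Prod.fst = X ∧ G.image Prod.snd = Y ∧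
      mw A G = ∑ i : {x // x ∈ X}, A i.1 (σ i).1 := by
  refine ⟨Finset.univ.image (fun i : {x // x ∈ X} => ((i : Fin n), ((σ i : {x // x ∈ Y}) : Fin n))),
    ⟨?_, ?_⟩, ?_, ?_, ?_⟩
  · intro p hp q hq hpq
    obtain ⟨i, -, rfl⟩ := Finset.mem_image.mp hp
    obtain ⟨i', -, rfl⟩ := Finset.mem_image.mp hq
    have : i = i' := Subtype.ext hpq
    rw [this]
  · intro p hp q hq hpq
    obtain ⟨i, -, rfl⟩ := Finset.mem_image.mp hp
    obtain ⟨i', -, rfl⟩ := Finset.mem_image.mp hq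
    have : i = i' := σ.injective (Subtype.ext hpq)
    rw [this]
  · ext x
    simp only [Finset.image_image, Function.comp, Finset.mem_image, Finset.mem_univ, true_and]
    constructor
    · rintro ⟨i, rfl⟩; exact i.2
    · intro hx; exact ⟨⟨x, hx⟩, rfl⟩
  · ext y
    simp only [Finset.image_image, Function.comp, Finset.mem_image, Finset.mem_univ, true_and]
    constructor
    · rintro ⟨i, rfl⟩; exact (σ i).2
    · intro hy; exact ⟨σ.symm ⟨y, hy⟩, by simp⟩
  · rw [mw, Finset.sum_image]
    intro i _ i' _ h
    exact Subtype.ext (congrArg Prod.fst h)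

lemma matching_to_equiv (A : Matrix (Fin n) (Fin n) Rmax) {G : Finset (Fin n × Fin n)}
    (hM : IsM G) (X Y : Finset (Fin n))
    (hF : G.image Prod.fst = X) (hS : G.image Prod.snd = Y) :
    ∃ σ : {x // x ∈ X} ≃ {x // x ∈ Y},
      ∑ i : {x // x ∈ X}, A i.1 (σ i).1 = mw A G := by
  subst hF; subst hS
  have hch : ∀ i : {x // x ∈ G.image Prod.fst}, ∃ p, p ∈ G ∧ p.1 = (i : Fin n) := by
    intro i
    obtain ⟨p, hp, hpe⟩ := Finset.mem_image.mp i.2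
    exact ⟨p, hp, hpe⟩
  choose g hg1 hg2 using hch
  let f : {x // x ∈ G.image Prod.fst} → {x // x ∈ G.image Prod.snd} :=
    fun i => ⟨(g i).2, Finset.mem_image_of_mem Prod.snd (hg1 i)⟩
  have hinj : Function.Injective f := by
    intro i i' h
    have h2 : (g i).2 = (g i').2 := congrArg Subtype.val h
    have : g i = g i' := hM.2 _ (hg1 i) _ (hg1 i') h2
    exact Subtype.ext (by rw [← hg2 i, ← hg2 i', this])
  have hcards : Fintype.card {x // x ∈ G.image Prod.fst}
      = Fintype.card {x // x ∈ G.image Prod.snd} := by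
    rw [Fintype.card_coe, Fintype.card_coe,
      Finset.card_image_of_injOn (fun p hp q hq h => hM.1 p hp q hq h),
      Finset.card_image_of_injOn (fun p hp q hq h => hM.2 p hp q hq h)]
  refine ⟨Equiv.ofBijective f ((Fintype.bijective_iff_injective_and_card f).mpr ⟨hinj, hcards⟩), ?_⟩
  show ∑ i : {x // x ∈ G.image Prod.fst}, A (i : Fin n) ((f i : {x // x ∈ G.image Prod.snd}) : Fin n) = mw A G
  rw [mw]
  refine Finset.sum_nbij (fun i => g i) (fun i _ => hg1 i) ?_ ?_ ?_
  · intro i _ i' _ h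
    have h' : g i = g i' := h
    refine Subtype.ext ?_
    rw [← hg2 i, ← hg2 i', h']
  · intro p hp
    have hpX : p.1 ∈ G.image Prod.fst := Finset.mem_image_of_mem Prod.fst hp
    refine ⟨⟨p.1, hpX⟩, Finset.mem_coe.mpr (Finset.mem_univ _), ?_⟩
    exact hM.1 _ (hg1 ⟨p.1, hpX⟩) _ hp (hg2 ⟨p.1, hpX⟩)
  · intro i _
    exact congrArg (fun z => A z (g i).2) (hg2 i).symm

lemma pad (A : Matrix (Fin n) (Fin n) Rmax) (hdiag : ∀ i, A i i = 0)
    (X Y : Finset (Fin n)) (H : Finset (Fin n × Fin n)) (hM : IsM H)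
    (hF : H.image Prod.fst = X \ Y) (hS : H.image Prod.snd = Y \ X) :
    ∃ G, IsM G ∧ G.image Prod.fst = X ∧ G.image Prod.snd = Y ∧ mw A G = mw A H := by
  set D := (X ∩ Y).image (fun j => (j, j)) with hD
  have hmemD : ∀ p ∈ D, p.1 = p.2 ∧ p.1 ∈ X ∩ Y := by
    intro p hp
    obtain ⟨j, hj, rfl⟩ := Finset.mem_image.mp hp
    exact ⟨rfl, hj⟩
  have hmemH1 : ∀ p ∈ H, p.1 ∈ X \ Y := fun p hp =>
    hF ▸ Finset.mem_image_of_mem Prod.fst hp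
  have hmemH2 : ∀ p ∈ H, p.2 ∈ Y \ X := fun p hp =>
    hS ▸ Finset.mem_image_of_mem Prod.snd hp
  have hdisjHD : Disjoint H D := by
    rw [Finset.disjoint_left]
    intro p hpH hpD
    have h1 := (Finset.mem_sdiff.mp (hmemH1 p hpH)).2
    exact h1 (Finset.mem_inter.mp (hmemD p hpD).2).2
  refine ⟨H ∪ D, ⟨?_, ?_⟩, ?_, ?_, ?_⟩
  · intro p hp q hq hpq
    rcases Finset.mem_union.mp hp with hp' | hp' <;>
      rcases Finset.mem_union.mp hq with hq' | hq'
    · exact hM.1 p hp' q hq' hpq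
    · have h1 : p.1 ∉ Y := (Finset.mem_sdiff.mp (hmemH1 p hp')).2
      have h2 : q.1 ∈ Y := (Finset.mem_inter.mp (hmemD q hq').2).2
      exact absurd (show p.1 ∈ Y by rw [hpq]; exact h2) h1
    · have h1 : q.1 ∉ Y := (Finset.mem_sdiff.mp (hmemH1 q hq')).2
      have h2 : p.1 ∈ Y := (Finset.mem_inter.mp (hmemD p hp').2).2
      exact absurd (show q.1 ∈ Y by rw [← hpq]; exact h2) h1
    · obtain ⟨j, -, rfl⟩ := Finset.mem_image.mp hp'
      obtain ⟨j', -, rfl⟩ := Finset.mem_image.mp hq'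
      rw [show j = j' from hpq]
  · intro p hp q hq hpq
    rcases Finset.mem_union.mp hp with hp' | hp' <;>
      rcases Finset.mem_union.mp hq with hq' | hq'
    · exact hM.2 p hp' q hq' hpq
    · have h1 : p.2 ∉ X := (Finset.mem_sdiff.mp (hmemH2 p hp')).2
      have h2 : q.2 ∈ X := by
        rw [← (hmemD q hq').1]
        exact (Finset.mem_inter.mp (hmemD q hq').2).1
      exact absurd (show p.2 ∈ X by rw [hpq]; exact h2) h1
    · have h1 : q.2 ∉ X := (Finset.mem_sdiff.mp (hmemH2 q hq')).2
      have h2 : p.2 ∈ X := by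
        rw [← (hmemD p hp').1]
        exact (Finset.mem_inter.mp (hmemD p hp').2).1
      exact absurd (show q.2 ∈ X by rw [← hpq]; exact h2) h1
    · obtain ⟨j, -, rfl⟩ := Finset.mem_image.mp hp'
      obtain ⟨j', -, rfl⟩ := Finset.mem_image.mp hq'
      rw [show j = j' from hpq]
  · rw [Finset.image_union, hF, hD, Finset.image_image,
      show (Prod.fst ∘ fun j : Fin n => (j, j)) = id from rfl, Finset.image_id,
      Finset.sdiff_union_inter]
  · rw [Finset.image_union, hS, hD, Finset.image_image,
      show (Prod.snd ∘ fun j : Fin n => (j, j)) = id from rfl, Finset.image_id,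
      Finset.inter_comm, Finset.sdiff_union_inter]
  · have hDinj : ∀ x ∈ X ∩ Y, ∀ y ∈ X ∩ Y,
        (fun j : Fin n => (j, j)) x = (fun j : Fin n => (j, j)) y → x = y := by
      intro x _ y _ h
      exact congrArg Prod.fst h
    rw [mw, mw, Finset.sum_union hdisjHD]
    have h0 : ∑ p ∈ D, A p.1 p.2 = 0 := by
      rw [hD, Finset.sum_image hDinj]
      simp [hdiag]
    rw [h0, add_zero]

lemma ent_eq (A : Matrix (Fin n) (Fin n) Rmax) (hdiag : ∀ i, A i i = 0)
    (htrans : ∀ i t j, A i t + A t j ≤ A i j) (X Y : Finset (Fin n)) :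
    (Finset.univ.sup fun σ : {x // x ∈ X} ≃ {x // x ∈ Y} =>
        ∑ i : {x // x ∈ X}, A i.1 (σ i).1)
      = Finset.univ.sup fun σ : {x // x ∈ X \ Y} ≃ {x // x ∈ Y \ X} =>
          ∑ i : {x // x ∈ X \ Y}, A i.1 (σ i).1 := by
  apply le_antisymm
  · apply Finset.sup_le
    intro σ _
    obtain ⟨G, hM, hGF, hGS, hw⟩ := equiv_to_matching A X Y σ
    obtain ⟨H, hMH, hHF, hHS, hle⟩ := core A hdiag htrans G.card G hM le_rfl
    rw [hGF, hGS] at hHF hHS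
    obtain ⟨ρ, hρ⟩ := matching_to_equiv A hMH (X \ Y) (Y \ X) hHF hHS
    calc ∑ i : {x // x ∈ X}, A i.1 (σ i).1 = mw A G := hw.symm
      _ ≤ mw A H := hle
      _ = ∑ i : {x // x ∈ X \ Y}, A i.1 (ρ i).1 := hρ.symm
      _ ≤ _ := Finset.le_sup (f := fun σ : {x // x ∈ X \ Y} ≃ {x // x ∈ Y \ X} =>
          ∑ i : {x // x ∈ X \ Y}, A i.1 (σ i).1) (Finset.mem_univ ρ)
  · apply Finset.sup_le
    intro ρ _
    obtain ⟨H, hMH, hHF, hHS, hw⟩ := equiv_to_matching A (X \ Y) (Y \ X) ρ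
    obtain ⟨G, hMG, hGF, hGS, hwG⟩ := pad A hdiag X Y H hMH hHF hHS
    obtain ⟨σ, hσ⟩ := matching_to_equiv A hMG X Y hGF hGS
    calc ∑ i : {x // x ∈ X \ Y}, A i.1 (ρ i).1 = mw A H := hw.symm
      _ = mw A G := hwG.symm
      _ = ∑ i : {x // x ∈ X}, A i.1 (σ i).1 := hσ.symm
      _ ≤ _ := Finset.le_sup (f := fun σ : {x // x ∈ X} ≃ {x // x ∈ Y} =>
          ∑ i : {x // x ∈ X}, A i.1 (σ i).1) (Finset.mem_univ σ)

end TropAux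

/-- if `A` has zero diagonal and `A ⊙ A = A` (so `A = A*`), then
`A^{∧(n−k)}_{Jᶜ,Iᶜ} = A^{∧k}_{I,J}`. -/
theorem compound_compl_of_star {n : ℕ} (A : Matrix (Fin n) (Fin n) Rmax)
    (hdiag : ∀ i, A i i = 0) (hidem : tropMul A A = A)
    (k : ℕ) (hk1 : 1 ≤ k) (hk2 : k ≤ n - 1)
    (I J : KSub n k) :
    compound (n - k) A
        ⟨J.1ᶜ, by simp [Finset.card_compl, J.2]⟩
        ⟨I.1ᶜ, by simp [Finset.card_compl, I.2]⟩
      = compound k A I J := by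
  have htrans : ∀ i t j, A i t + A t j ≤ A i j := by
    intro i t j
    conv_rhs => rw [← hidem]
    exact Finset.le_sup (f := fun t => A i t + A t j) (Finset.mem_univ t)
  show (Finset.univ.sup fun σ : {x // x ∈ J.1ᶜ} ≃ {x // x ∈ I.1ᶜ} =>
      ∑ i : {x // x ∈ J.1ᶜ}, A i.1 (σ i).1)
    = Finset.univ.sup fun σ : {x // x ∈ I.1} ≃ {x // x ∈ J.1} =>
        ∑ i : {x // x ∈ I.1}, A i.1 (σ i).1
  rw [TropAux.ent_eq A hdiag htrans (J.1ᶜ) (I.1ᶜ), TropAux.ent_eq A hdiag htrans I.1 J.1,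
    compl_sdiff_compl, compl_sdiff_compl]
end
end

section
/- Over the max-plus semiring, let A be a definite n×n matrix over ℝ_max (per(A) = 0 and A_{i,i} = 0 for all i). Then: (i) every cycle of A has nonpositive weight, i.e. for every cycle (i_1, i_2, …, i_m, i_1) of distinct indices one has A_{i_1,i_2} + A_{i_2,i_3} + ⋯ + A_{i_m,i_1} ≤ 0; (ii) the tropical powers stabilize: A^{⊙k} = A^{⊙(n−1)} for every k ≥ n−1; and (iii) A^{⊙(n−1)} = adj(A) = A^∇ = (A^∇)^∇. -/
open Matrix

noncomputable section

set_option linter.unusedTactic false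

namespace TropAux
lemma sup_add {α : Type*} (s : Finset α) (f : α → Rmax) (c : Rmax) :
    s.sup f + c = s.sup fun x => f x + c := by
  refine Finset.comp_sup_eq_sup_comp (· + c) (fun x y => ?_) (by simp)
  exact (max_add_add_right x y c).symm
lemma tropMul_apply {l m p : Type*} [Fintype m] (A : Matrix l m Rmax) (B : Matrix m p Rmax)
    (i j) : tropMul A B i j = Finset.univ.sup fun t => A i t + B t j := rfl

lemma add_sup {α : Type*} (s : Finset α) (f : α → Rmax) (c : Rmax) :
    c + s.sup f = s.sup fun x => c + f x := by
  refine Finset.comp_sup_eq_sup_comp (c + ·) (fun x y => ?_) (by simp)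
  show c + (x ⊔ y) = (c + x) ⊔ (c + y)
  exact (max_add_add_left c x y).symm

lemma tropMul_assoc {l m p q : Type*} [Fintype m] [Fintype p]
    (A : Matrix l m Rmax) (B : Matrix m p Rmax) (C : Matrix p q Rmax) :
    tropMul (tropMul A B) C = tropMul A (tropMul B C) := by
  ext i j
  simp only [tropMul_apply, sup_add, add_sup]
  rw [Finset.sup_comm]
  exact Finset.sup_congr rfl fun t _ => Finset.sup_congr rfl fun s _ => (add_assoc _ _ _)

lemma tropMul_id {l m : Type*} [Fintype m] [DecidableEq m] (A : Matrix l m Rmax) :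
    tropMul A (tropId m) = A := by
  ext i j
  simp only [tropMul_apply, tropId, Matrix.of_apply]
  apply le_antisymm
  · refine Finset.sup_le fun t _ => ?_
    by_cases h : t = j <;> simp [h]
  · refine le_trans ?_ (Finset.le_sup (Finset.mem_univ j))
    simp

lemma id_tropMul {l m : Type*} [Fintype m] [DecidableEq m] (A : Matrix m l Rmax) :
    tropMul (tropId m) A = A := by
  ext i j
  simp only [tropMul_apply, tropId, Matrix.of_apply]
  apply le_antisymm
  · refine Finset.sup_le fun t _ => ?_
    by_cases h : i = t <;> simp [h]
  · refine le_trans ?_ (Finset.le_sup (Finset.mem_univ i))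
    simp

lemma tropPow_add {m : Type*} [Fintype m] [DecidableEq m] (A : Matrix m m Rmax) (a b : ℕ) :
    tropPow A (a + b) = tropMul (tropPow A a) (tropPow A b) := by
  induction b with
  | zero => simp [tropPow, tropMul_id]
  | succ b ih => rw [← Nat.add_assoc]; show tropMul _ _ = _
                 rw [ih, tropMul_assoc]; rfl

variable {n : ℕ}

/-- weight of the walk `p 0, p 1, ..., p m`. -/
def wWalk (A : Matrix (Fin (n+1)) (Fin (n+1)) Rmax) {m : ℕ} (p : Fin (m+1) → Fin (n+1)) :
    Rmax := ∑ t : Fin m, A (p t.castSucc) (p t.succ)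

def walkSet (k : ℕ) (i j : Fin (n+1)) : Finset (Fin (k+1) → Fin (n+1)) :=
  Finset.univ.filter fun p => p 0 = i ∧ p (Fin.last k) = j

lemma wWalk_snoc (A : Matrix (Fin (n+1)) (Fin (n+1)) Rmax) {m : ℕ}
    (p : Fin (m+1) → Fin (n+1)) (x : Fin (n+1)) :
    wWalk A (Fin.snoc p x) = wWalk A p + A (p (Fin.last m)) x := by
  unfold wWalk
  rw [Fin.sum_univ_castSucc]
  congr 1
  · refine Finset.sum_congr rfl fun t _ => ?_
    rw [Fin.succ_castSucc, Fin.snoc_castSucc, Fin.snoc_castSucc]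
  · rw [Fin.succ_last, Fin.snoc_last, Fin.snoc_castSucc]

lemma tropPow_apply (A : Matrix (Fin (n+1)) (Fin (n+1)) Rmax) (k : ℕ) (i j : Fin (n+1)) :
    tropPow A k i j = (walkSet k i j).sup (wWalk A) := by
  induction k generalizing j with
  | zero =>
    show tropId _ i j = _
    rcases eq_or_ne i j with h | h
    · subst h
      apply le_antisymm
      · have : (fun _ : Fin 1 => i) ∈ walkSet 0 i i := by simp [walkSet]
        refine le_trans ?_ (Finset.le_sup this)
        simp [tropId, wWalk]
      · refine Finset.sup_le fun p _ => ?_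
        simp [tropId, wWalk]
    · have : walkSet 0 i j = ∅ := by
        refine Finset.filter_false_of_mem fun p _ => ?_
        rintro ⟨h0, h1⟩
        exact h (h0 ▸ h1 ▸ rfl)
      simp [this, tropId, h]
  | succ k ih =>
    show tropMul _ _ i j = _
    rw [tropMul_apply]
    apply le_antisymm
    · refine Finset.sup_le fun t _ => ?_
      rw [ih, sup_add]
      refine Finset.sup_le fun p hp => ?_
      simp only [walkSet, Finset.mem_filter] at hp
      have hmem : Fin.snoc p j ∈ walkSet (k+1) i j := by
        simp only [walkSet, Finset.mem_filter, Finset.mem_univ, true_and]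
        constructor
        · rw [show (0 : Fin (k+2)) = Fin.castSucc 0 by simp, Fin.snoc_castSucc, hp.2.1]
        · rw [Fin.snoc_last]
      refine le_trans ?_ (Finset.le_sup hmem)
      rw [wWalk_snoc, hp.2.2]
    · refine Finset.sup_le fun q hq => ?_
      simp only [walkSet, Finset.mem_filter] at hq
      set t := q (Fin.last k).castSucc with ht
      have key : wWalk A q = wWalk A (Fin.init q) + A t j := by
        conv_lhs => rw [← Fin.snoc_init_self q]
        rw [wWalk_snoc]
        congr 1
        · exact hq.2.2.symm ▸ rfl
      refine le_trans (le_of_eq key) (le_trans ?_ (Finset.le_sup (f := fun t => tropPow A k i t + A t j) (Finset.mem_univ t)))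
      show wWalk A (Fin.init q) + A t j ≤ tropPow A k i t + A t j
      rw [ih, sup_add]
      have hmem : Fin.init q ∈ walkSet k i t := by
        simp only [walkSet, Finset.mem_filter, Finset.mem_univ, true_and]
        refine ⟨?_, rfl⟩
        show q (Fin.castSucc 0) = i
        rw [Fin.castSucc_zero, hq.2.1]
      exact Finset.le_sup (f := fun x => wWalk A x + A t j) hmem

lemma walk_le_pow (A : Matrix (Fin (n+1)) (Fin (n+1)) Rmax) {m : ℕ}
    (p : Fin (m+1) → Fin (n+1)) : wWalk A p ≤ tropPow A m (p 0) (p (Fin.last m)) := by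
  rw [tropPow_apply]
  exact Finset.le_sup (by simp [walkSet])

lemma pow_mono (A : Matrix (Fin (n+1)) (Fin (n+1)) Rmax) (hdiag : ∀ i, A i i = 0)
    {k k' : ℕ} (h : k ≤ k') (i j : Fin (n+1)) : tropPow A k i j ≤ tropPow A k' i j := by
  induction k' with
  | zero => cases Nat.le_zero.mp h; exact le_rfl
  | succ k' ih =>
    rcases Nat.lt_or_ge k (k'+1) with h' | h'
    · refine le_trans (ih (Nat.lt_succ_iff.mp h')) ?_
      rw [tropPow_apply, tropPow_apply]
      refine Finset.sup_le fun p hp => ?_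
      simp only [walkSet, Finset.mem_filter] at hp
      have hmem : Fin.snoc p j ∈ walkSet (k'+1) i j := by
        simp only [walkSet, Finset.mem_filter, Finset.mem_univ, true_and]
        refine ⟨?_, by rw [Fin.snoc_last]⟩
        rw [show (0 : Fin (k'+2)) = Fin.castSucc 0 by simp, Fin.snoc_castSucc, hp.2.1]
      refine le_trans ?_ (Finset.le_sup hmem)
      rw [wWalk_snoc, hp.2.2, hdiag, add_zero]
    · have : k = k' + 1 := le_antisymm h h'
      subst this; exact le_rfl


/-- weight of the walk `p 0, ..., p m` (ℕ-indexed). -/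
def NW (A : Matrix (Fin (n+1)) (Fin (n+1)) Rmax) (p : ℕ → Fin (n+1)) (m : ℕ) : Rmax :=
  ∑ t ∈ Finset.range m, A (p t) (p (t+1))

variable {A : Matrix (Fin (n+1)) (Fin (n+1)) Rmax}

lemma perm_sum_le (hper : tropPer A = 0) (π : Equiv.Perm (Fin (n+1))) :
    ∑ x, A x (π x) ≤ 0 := by
  rw [← hper]
  exact Finset.le_sup (f := fun σ : Equiv.Perm (Fin (n+1)) => ∑ i, A i (σ i))
    (Finset.mem_univ π)

/-- Part (i): each elementary cycle has nonpositive weight. -/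
lemma cycle_le (hper : tropPer A = 0) (hdiag : ∀ i, A i i = 0) (m : ℕ)
    (c : Fin (m+1) → Fin (n+1)) (hc : Function.Injective c) :
    ∑ t, A (c t) (c (t + 1)) ≤ 0 := by
  set f : Fin (m+1) ↪ Fin (n+1) := ⟨c, hc⟩ with hf
  set π := (finRotate (m+1)).viaFintypeEmbedding f with hπ
  have h1 : ∀ t, π (c t) = c (t+1) := by
    intro t
    have := Equiv.Perm.viaFintypeEmbedding_apply_image (finRotate (m+1)) f t
    simpa [hf, finRotate_succ_apply] using this
  have h2 : ∀ x, (∀ t, c t ≠ x) → π x = x := by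
    intro x hx
    refine Equiv.Perm.viaFintypeEmbedding_apply_notMem_range (finRotate (m+1)) f ?_
    rintro ⟨t, rfl⟩
    exact hx t rfl
  have total := perm_sum_le hper π
  set S := Finset.univ.image c with hS
  have hsplit : (∑ x ∈ S, A x (π x)) + ∑ x ∈ Sᶜ, A x (π x) = ∑ x, A x (π x) :=
    Finset.sum_add_sum_compl S _
  have hone : ∑ x ∈ S, A x (π x) = ∑ t, A (c t) (c (t+1)) := by
    rw [hS, Finset.sum_image (fun a _ b _ h => hc h)]
    exact Finset.sum_congr rfl fun t _ => by rw [h1]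
  have htwo : ∑ x ∈ Sᶜ, A x (π x) = 0 := by
    refine Finset.sum_eq_zero fun x hx => ?_
    have hx' : ∀ t, c t ≠ x := by
      intro t ht
      rw [Finset.mem_compl, hS] at hx
      exact hx (Finset.mem_image.mpr ⟨t, Finset.mem_univ t, ht⟩)
    rw [h2 x hx', hdiag]
  rw [← hone]
  calc ∑ x ∈ S, A x (π x) = (∑ x ∈ S, A x (π x)) + ∑ x ∈ Sᶜ, A x (π x) := by
        rw [htwo, add_zero]
    _ ≤ 0 := hsplit ▸ total

lemma NW_split {p : ℕ → Fin (n+1)} {s t m : ℕ} (hst : s < t) (htm : t ≤ m)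
    (hpst : p s = p t) :
    NW A p m = NW A (fun u => if u ≤ s then p u else p (u + (t - s))) (m - (t - s))
      + NW A (fun u => p (s + u)) (t - s) := by
  have hsm : s ≤ m := le_trans (le_of_lt hst) htm
  have hsub : m - (t - s) - s = m - t := by omega
  have hs' : s ≤ m - (t - s) := by omega
  set f : ℕ → Rmax := fun u => A (p u) (p (u+1)) with hfdef
  set g : ℕ → Rmax := fun u =>
    A (if u ≤ s then p u else p (u + (t - s)))
      (if u + 1 ≤ s then p (u+1) else p (u + 1 + (t - s))) with hgdef
  have L : NW A p m = ∑ u ∈ Finset.Ico 0 s, f u + (∑ u ∈ Finset.Ico s t, f u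
        + ∑ u ∈ Finset.Ico t m, f u) := by
    rw [Finset.sum_Ico_consecutive f (le_of_lt hst) htm,
      Finset.sum_Ico_consecutive f (Nat.zero_le s) hsm]
    unfold NW
    rw [Finset.range_eq_Ico]
  have R1 : NW A (fun u => p (s + u)) (t - s) = ∑ u ∈ Finset.Ico s t, f u := by
    unfold NW
    rw [Finset.sum_Ico_eq_sum_range]
    rfl
  have R2 : NW A (fun u => if u ≤ s then p u else p (u + (t - s))) (m - (t - s))
      = ∑ u ∈ Finset.Ico 0 s, f u + ∑ u ∈ Finset.Ico t m, f u := by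
    unfold NW
    have : ∀ u, A (if u ≤ s then p u else p (u + (t - s)))
        (if u + 1 ≤ s then p (u+1) else p (u + 1 + (t - s))) = g u := fun u => rfl
    rw [Finset.range_eq_Ico, ← Finset.sum_Ico_consecutive _ (Nat.zero_le s) hs']
    congr 1
    · refine Finset.sum_congr rfl fun u hu => ?_
      have hu' : u < s := (Finset.mem_Ico.mp hu).2
      beta_reduce
      rw [if_pos (by omega : u ≤ s), if_pos (by omega : u + 1 ≤ s)]
    · rw [Finset.sum_Ico_eq_sum_range, Finset.sum_Ico_eq_sum_range, hsub]
      refine Finset.sum_congr rfl fun u _ => ?_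
      beta_reduce
      rcases Nat.eq_zero_or_pos u with rfl | hu
      · simp only [Nat.add_zero]
        rw [if_pos le_rfl, if_neg (by omega : ¬ s + 1 ≤ s),
          (by omega : s + 1 + (t - s) = t + 1), hpst]
      · rw [if_neg (by omega : ¬ s + u ≤ s), if_neg (by omega : ¬ s + u + 1 ≤ s),
          (by omega : s + u + (t - s) = t + u), (by omega : s + u + 1 + (t - s) = t + u + 1)]
  rw [L, R1, R2]
  abel

lemma NW_closed (hper : tropPer A = 0) (hdiag : ∀ i, A i i = 0) :
    ∀ (m : ℕ) (p : ℕ → Fin (n+1)), p m = p 0 → NW A p m ≤ 0 := by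
  intro m
  induction m using Nat.strong_induction_on with
  | _ m ih =>
  intro p hp
  rcases Nat.eq_zero_or_pos m with rfl | hm
  · simp [NW]
  by_cases hinj : ∀ a b : ℕ, a < m → b < m → p a = p b → a = b
  · -- simple cycle
    obtain ⟨m', rfl⟩ : ∃ m', m = m' + 1 := ⟨m - 1, by omega⟩
    set c : Fin (m'+1) → Fin (n+1) := fun t => p t.val with hc
    have hcinj : Function.Injective c := by
      intro a b hab
      exact Fin.ext (hinj a.val b.val a.isLt b.isLt hab)
    have key : NW A p (m'+1) = ∑ t, A (c t) (c (t+1)) := by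
      unfold NW
      rw [← Fin.sum_univ_eq_sum_range (fun u => A (p u) (p (u+1))) (m'+1)]
      refine Finset.sum_congr rfl fun t _ => ?_
      have : c (t+1) = p (t.val + 1) := by
        show p ((t+1) : Fin (m'+1)).val = p (t.val + 1)
        rcases Nat.lt_or_ge (t.val + 1) (m'+1) with h | h
        · congr 1
          rw [Fin.val_add_one]
          split
          · next heq =>
            exact absurd (congrArg Fin.val heq) (by simp; omega)
          · rfl
        · have ht : t.val = m' := by omega
          have hv : ((t + 1) : Fin (m'+1)).val = 0 := by
            rw [Fin.val_add_one, if_pos (Fin.ext ht : t = Fin.last m')]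
          rw [hv, ht, ← hp]
      rw [this]
    rw [key]
    exact cycle_le hper hdiag m' c hcinj
  · push_neg at hinj
    obtain ⟨a, b, ha, hb, hab, hne⟩ := hinj
    -- order them
    obtain ⟨s, t, hst, htm, hpst⟩ : ∃ s t, s < t ∧ t < m ∧ p s = p t := by
      rcases Nat.lt_or_ge a b with h | h
      · exact ⟨a, b, h, hb, hab⟩
      · exact ⟨b, a, by omega, ha, hab.symm⟩
    rw [NW_split hst (le_of_lt htm) hpst]
    have h1 : NW A (fun u => p (s + u)) (t - s) ≤ 0 := by
      refine ih (t - s) (by omega) _ ?_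
      show p (s + (t - s)) = p (s + 0)
      have e1 : s + (t - s) = t := by omega
      simp only [Nat.add_zero, e1, hpst]
    have h2 : NW A (fun u => if u ≤ s then p u else p (u + (t - s))) (m - (t - s)) ≤ 0 := by
      refine ih (m - (t - s)) (by omega) _ ?_
      beta_reduce
      rw [if_neg (by omega : ¬ m - (t - s) ≤ s), if_pos (Nat.zero_le s),
        (by omega : m - (t - s) + (t - s) = m), hp]
    exact add_nonpos h2 h1

/-- loop erasure -/
lemma NW_erase (hper : tropPer A = 0) (hdiag : ∀ i, A i i = 0) :
    ∀ (m : ℕ) (p : ℕ → Fin (n+1)), ∃ (ℓ : ℕ) (q : ℕ → Fin (n+1)), ℓ ≤ m ∧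
      q 0 = p 0 ∧ q ℓ = p m ∧ (∀ a b : ℕ, a ≤ ℓ → b ≤ ℓ → q a = q b → a = b) ∧
      NW A p m ≤ NW A q ℓ := by
  intro m
  induction m using Nat.strong_induction_on with
  | _ m ih =>
  intro p
  by_cases hinj : ∀ a b : ℕ, a ≤ m → b ≤ m → p a = p b → a = b
  · exact ⟨m, p, le_rfl, rfl, rfl, hinj, le_rfl⟩
  · push_neg at hinj
    obtain ⟨a, b, ha, hb, hab, hne⟩ := hinj
    obtain ⟨s, t, hst, htm, hpst⟩ : ∃ s t, s < t ∧ t ≤ m ∧ p s = p t := by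
      rcases Nat.lt_or_ge a b with h | h
      · exact ⟨a, b, h, hb, hab⟩
      · exact ⟨b, a, by omega, ha, hab.symm⟩
    set w2 : ℕ → Fin (n+1) := fun u => if u ≤ s then p u else p (u + (t - s)) with hw2
    have hbound : NW A p m ≤ NW A w2 (m - (t - s)) := by
      rw [NW_split hst htm hpst]
      have h1 : NW A (fun u => p (s + u)) (t - s) ≤ 0 := by
        refine NW_closed hper hdiag (t - s) _ ?_
        show p (s + (t - s)) = p (s + 0)
        have e1 : s + (t - s) = t := by omega
        simp only [Nat.add_zero, e1, hpst]
      calc NW A w2 (m - (t - s)) + NW A (fun u => p (s + u)) (t - s)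
          ≤ NW A w2 (m - (t - s)) + 0 := add_le_add_right h1 _
        _ = NW A w2 (m - (t - s)) := add_zero _
    obtain ⟨ℓ, q, hl, hq0, hql, hqinj, hle⟩ := ih (m - (t - s)) (by omega) w2
    refine ⟨ℓ, q, by omega, ?_, ?_, hqinj, le_trans hbound hle⟩
    · rw [hq0, hw2]; beta_reduce; rw [if_pos (Nat.zero_le s)]
    · rw [hql, hw2]
      beta_reduce
      rcases Nat.lt_or_ge (m - (t - s)) (s + 1) with h | h
      · -- m - (t-s) ≤ s, happens when t = m
        rw [if_pos (by omega : m - (t - s) ≤ s)]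
        have : m - (t - s) = s := by omega
        rw [this, hpst]
        congr 1
        omega
      · rw [if_neg (by omega : ¬ m - (t - s) ≤ s)]
        congr 1
        omega

lemma NW_eq_wWalk (q : ℕ → Fin (n+1)) (ℓ : ℕ) :
    NW A q ℓ = wWalk A (fun t : Fin (ℓ+1) => q t.val) := by
  unfold NW wWalk
  rw [← Fin.sum_univ_eq_sum_range (fun u => A (q u) (q (u+1))) ℓ]
  exact Finset.sum_congr rfl fun t _ => rfl

lemma wWalk_eq_NW {m : ℕ} (pf : Fin (m+1) → Fin (n+1)) :
    wWalk A pf = NW A (fun t => pf ⟨min t m, Nat.lt_succ_of_le (min_le_right t m)⟩) m := by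
  unfold NW wWalk
  rw [← Fin.sum_univ_eq_sum_range
    (fun u => A (pf ⟨min u m, Nat.lt_succ_of_le (min_le_right u m)⟩)
      (pf ⟨min (u+1) m, Nat.lt_succ_of_le (min_le_right (u+1) m)⟩)) m]
  refine Finset.sum_congr rfl fun t _ => ?_
  have h1 : t.castSucc = (⟨min (t:ℕ) m, Nat.lt_succ_of_le (min_le_right _ m)⟩ : Fin (m+1)) := by
    refine Fin.ext ?_
    simp only [Fin.coe_castSucc]
    omega
  have h2 : t.succ = (⟨min ((t:ℕ)+1) m, Nat.lt_succ_of_le (min_le_right _ m)⟩ : Fin (m+1)) := by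
    refine Fin.ext ?_
    simp only [Fin.val_succ]
    have := t.isLt
    omega
  rw [h1, h2]

lemma NW_le_pow (hper : tropPer A = 0) (hdiag : ∀ i, A i i = 0) (p : ℕ → Fin (n+1)) (m : ℕ) :
    NW A p m ≤ tropPow A n (p 0) (p m) := by
  obtain ⟨ℓ, q, hl, h0, hl2, hinj, hle⟩ := NW_erase hper hdiag m p
  have hlen : ℓ ≤ n := by
    have hinj' : Function.Injective (fun t : Fin (ℓ+1) => q t.val) := by
      intro a b h
      exact Fin.ext (hinj a.val b.val (Nat.lt_succ_iff.mp a.isLt) (Nat.lt_succ_iff.mp b.isLt) h)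
    have := Fintype.card_le_of_injective _ hinj'
    simpa using this
  calc NW A p m ≤ NW A q ℓ := hle
    _ = wWalk A (fun t : Fin (ℓ+1) => q t.val) := NW_eq_wWalk q ℓ
    _ ≤ tropPow A ℓ (q 0) (q ℓ) := walk_le_pow A _
    _ ≤ tropPow A n (q 0) (q ℓ) := pow_mono A hdiag hlen _ _
    _ = tropPow A n (p 0) (p m) := by rw [h0, hl2]

/-- Part (ii): powers stabilize. -/
lemma pow_stab (hper : tropPer A = 0) (hdiag : ∀ i, A i i = 0) {k : ℕ} (hk : n ≤ k) :
    tropPow A k = tropPow A n := by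
  ext i j
  apply le_antisymm
  · rw [tropPow_apply A k]
    refine Finset.sup_le fun pf hpf => ?_
    simp only [walkSet, Finset.mem_filter] at hpf
    rw [wWalk_eq_NW pf]
    refine le_trans (NW_le_pow hper hdiag _ k) (le_of_eq ?_)
    congr 1
    · show pf ⟨min 0 k, _⟩ = i
      rw [← hpf.2.1]
      congr 1
    · show pf ⟨min k k, _⟩ = j
      rw [← hpf.2.2]
      congr 1
      exact Fin.ext (by simp [Fin.last])
  · exact pow_mono A hdiag hk i j


lemma adj_apply (i j : Fin (n+1)) :
    tropAdj A i j = Finset.univ.sup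
      (fun τ : Equiv.Perm (Fin n) => ∑ a, A (j.succAbove a) (i.succAbove (τ a))) := rfl

lemma sum_succAbove (j : Fin (n+1)) (g : Fin (n+1) → Rmax) :
    ∑ a : Fin n, g (j.succAbove a) = ∑ x ∈ Finset.univ.erase j, g x := by
  rw [show Finset.univ.erase j = Finset.univ.image j.succAbove from ?_,
    Finset.sum_image (fun a _ b _ h => Fin.succAbove_right_injective h)]
  ext x
  simp only [Finset.mem_erase, Finset.mem_univ, and_true, Finset.mem_image, true_and]
  constructor
  · intro h
    obtain ⟨z, hz⟩ := Fin.exists_succAbove_eq h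
    exact ⟨z, hz⟩
  · rintro ⟨z, rfl⟩
    exact Fin.succAbove_ne j z

lemma sum_cycle_erase {ℓ : ℕ} (r : Fin (ℓ+1) → Fin (n+1)) (rinj : Function.Injective r)
    (F : Fin (n+1) → Rmax) :
    ∑ x ∈ (Finset.univ.image r).erase (r (Fin.last ℓ)), F x = ∑ t : Fin ℓ, F (r t.castSucc) := by
  have himg : (Finset.univ.image r).erase (r (Fin.last ℓ))
      = Finset.univ.image (fun t : Fin ℓ => r t.castSucc) := by
    ext x
    simp only [Finset.mem_erase, Finset.mem_image, Finset.mem_univ, true_and]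
    constructor
    · rintro ⟨hne, t, rfl⟩
      have ht : t ≠ Fin.last ℓ := fun h => hne (by rw [h])
      obtain ⟨s, rfl⟩ := Fin.eq_castSucc_of_ne_last ht
      exact ⟨s, rfl⟩
    · rintro ⟨s, rfl⟩
      refine ⟨fun h => ?_, ⟨s.castSucc, rfl⟩⟩
      exact absurd (rinj h) (ne_of_lt (Fin.castSucc_lt_last s))
  rw [himg, Finset.sum_image (fun a _ b _ h =>
    Fin.castSucc_injective ℓ (rinj h))]

lemma split_erase_sum (C : Finset (Fin (n+1))) (j : Fin (n+1)) (hj : j ∈ C)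
    (F : Fin (n+1) → Rmax) :
    ∑ x ∈ Finset.univ.erase j, F x = ∑ x ∈ C.erase j, F x + ∑ x ∈ Cᶜ, F x := by
  have hsplit : Finset.univ.erase j = (C.erase j) ∪ Cᶜ := by
    ext x
    simp only [Finset.mem_erase, Finset.mem_univ, and_true, Finset.mem_union,
      Finset.mem_compl]
    constructor
    · intro hx
      by_cases h : x ∈ C
      · exact Or.inl ⟨hx, h⟩
      · exact Or.inr h
    · rintro (⟨hx, _⟩ | hx)
      · exact hx
      · exact fun h => hx (h ▸ hj)
  rw [hsplit, Finset.sum_union]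
  exact Finset.disjoint_left.mpr fun x hx hx' =>
    (Finset.mem_compl.mp hx') (Finset.mem_of_mem_erase hx)

lemma wWalk_exists_NW {m : ℕ} (pf : Fin (m+1) → Fin (n+1)) :
    ∃ p : ℕ → Fin (n+1), p 0 = pf 0 ∧ p m = pf (Fin.last m) ∧ wWalk A pf = NW A p m := by
  refine ⟨fun t => pf ⟨min t m, Nat.lt_succ_of_le (min_le_right t m)⟩, ?_, ?_, wWalk_eq_NW pf⟩
  · congr 1
  · congr 1
    exact Fin.ext (by simp [Fin.last])

lemma pow_le_adj (hper : tropPer A = 0) (hdiag : ∀ i, A i i = 0) (i j : Fin (n+1)) :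
    tropPow A n i j ≤ tropAdj A i j := by
  rw [tropPow_apply A n]
  refine Finset.sup_le fun pf hpf => ?_
  simp only [walkSet, Finset.mem_filter] at hpf
  obtain ⟨p, hp0, hpm, hpw⟩ := wWalk_exists_NW pf
  rw [hpw]
  obtain ⟨ℓ, q, hl, hq0, hql, hqinj, hle⟩ := NW_erase hper hdiag n p
  refine le_trans hle ?_
  have hq0' : q 0 = i := by rw [hq0, hp0, hpf.2.1]
  have hql' : q ℓ = j := by rw [hql, hpm, hpf.2.2]
  set r : Fin (ℓ+1) → Fin (n+1) := fun t => q t.val with hr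
  have rinj : Function.Injective r := by
    intro a b h
    exact Fin.ext (hqinj a.val b.val (Nat.lt_succ_iff.mp a.isLt) (Nat.lt_succ_iff.mp b.isLt) h)
  set π := (finRotate (ℓ+1)).viaFintypeEmbedding ⟨r, rinj⟩ with hπdef
  have hπ : ∀ t, π (r t) = r (t + 1) := by
    intro t
    have := Equiv.Perm.viaFintypeEmbedding_apply_image (finRotate (ℓ+1)) ⟨r, rinj⟩ t
    simpa [finRotate_succ_apply] using this
  have hπout : ∀ x, (∀ t, r t ≠ x) → π x = x := by
    intro x hx
    refine Equiv.Perm.viaFintypeEmbedding_apply_notMem_range (finRotate (ℓ+1)) ⟨r, rinj⟩ ?_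
    rintro ⟨t, rfl⟩
    exact hx t rfl
  have hπj : π j = i := by
    have := hπ (Fin.last ℓ)
    rw [show r (Fin.last ℓ) = j from hql', Fin.last_add_one,
      show r 0 = i from hq0'] at this
    exact this
  -- build τ : Perm (Fin n)
  set E : Option (Fin n) ≃ Option (Fin n) :=
    ((finSuccEquiv' j).symm.trans (π : Equiv.Perm (Fin (n+1)))).trans (finSuccEquiv' i)
    with hE
  have hEnone : E none = none := by
    simp only [hE, Equiv.trans_apply, finSuccEquiv'_symm_none, hπj, finSuccEquiv'_at]
  set τ := E.removeNone with hτ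
  have hτa : ∀ a, i.succAbove (τ a) = π (j.succAbove a) := by
    intro a
    have hsome : ∃ x', E (some a) = some x' := by
      rcases h : E (some a) with _ | x'
      · exfalso
        have := E.injective (h.trans hEnone.symm)
        simp at this
      · exact ⟨x', rfl⟩
    have := Equiv.removeNone_some E hsome
    rw [← hτ] at this
    have hE' : E (some a) = finSuccEquiv' i (π (j.succAbove a)) := by
      simp only [hE, Equiv.trans_apply, finSuccEquiv'_symm_some]
    rw [hE'] at this
    have := congrArg (finSuccEquiv' i).symm this
    rwa [Equiv.symm_apply_apply, finSuccEquiv'_symm_some] at this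
  refine le_trans ?_ (Finset.le_sup (f := fun τ : Equiv.Perm (Fin n) =>
    ∑ a, A (j.succAbove a) (i.succAbove (τ a))) (Finset.mem_univ τ))
  have step1 : ∑ a, A (j.succAbove a) (i.succAbove (τ a))
      = ∑ x ∈ Finset.univ.erase j, A x (π x) := by
    rw [← sum_succAbove j (fun x => A x (π x))]
    exact Finset.sum_congr rfl fun a _ => by rw [hτa]
  set C := Finset.univ.image r with hC
  have hjC : j ∈ C := by
    rw [hC]
    exact Finset.mem_image.mpr ⟨Fin.last ℓ, Finset.mem_univ _, hql'⟩
  have step2 : ∑ x ∈ C.erase j, A x (π x) = wWalk A r := by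
    have : C.erase j = (Finset.univ.image r).erase (r (Fin.last ℓ)) := by
      rw [hC, show r (Fin.last ℓ) = j from hql']
    rw [this, sum_cycle_erase r rinj]
    refine Finset.sum_congr rfl fun t _ => ?_
    rw [hπ, Fin.coeSucc_eq_succ]
  have step3 : ∑ x ∈ Cᶜ, A x (π x) = 0 := by
    refine Finset.sum_eq_zero fun x hx => ?_
    have : ∀ t, r t ≠ x := by
      intro t ht
      exact (Finset.mem_compl.mp hx) (hC ▸ Finset.mem_image.mpr ⟨t, Finset.mem_univ t, ht⟩)
    rw [hπout x this, hdiag]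
  show NW A q ℓ ≤ ∑ a, A (j.succAbove a) (i.succAbove (τ a))
  rw [step1, split_erase_sum C j hjC, step2, step3, add_zero, ← NW_eq_wWalk]

/-- permutation that fixes `C` pointwise and agrees with `π` outside `C`. -/
def offC (π : Equiv.Perm (Fin (n+1))) (C : Finset (Fin (n+1)))
    (h1 : ∀ x ∈ C, π x ∈ C) (h2 : ∀ x ∈ C, π⁻¹ x ∈ C) : Equiv.Perm (Fin (n+1)) where
  toFun := fun x => if x ∈ C then x else π x
  invFun := fun x => if x ∈ C then x else π⁻¹ x
  left_inv := by
    intro x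
    by_cases hx : x ∈ C
    · simp [hx]
    · have hπx : π x ∉ C := fun h => hx (by simpa using h2 _ h)
      simp [hx, hπx]
  right_inv := by
    intro x
    by_cases hx : x ∈ C
    · simp [hx]
    · have hπx : π.symm x ∉ C := fun h => hx (by simpa using h1 _ h)
      simp [hx, hπx]

lemma offC_mem (π : Equiv.Perm (Fin (n+1))) (C : Finset (Fin (n+1))) (h1) (h2) {x}
    (hx : x ∈ C) : offC π C h1 h2 x = x := by simp [offC, hx]

lemma offC_not_mem (π : Equiv.Perm (Fin (n+1))) (C : Finset (Fin (n+1))) (h1) (h2) {x}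
    (hx : x ∉ C) : offC π C h1 h2 x = π x := by simp [offC, hx]

lemma orbit_chain (π : Equiv.Perm (Fin (n+1))) {i j : Fin (n+1)} (hj : π j = i) :
    ∃ (ℓ : ℕ) (r : Fin (ℓ+1) → Fin (n+1)), Function.Injective r ∧ r 0 = i ∧
      r (Fin.last ℓ) = j ∧ (∀ t : Fin ℓ, π (r t.castSucc) = r t.succ) ∧
      (∀ x ∈ Finset.univ.image r, π x ∈ Finset.univ.image r) ∧
      (∀ x ∈ Finset.univ.image r, π⁻¹ x ∈ Finset.univ.image r) := by
  have hex : ∃ t : ℕ, (π ^ t) i = j := by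
    refine ⟨orderOf π - 1, π.injective ?_⟩
    have : π ((π ^ (orderOf π - 1)) i) = (π ^ (orderOf π - 1 + 1)) i := by
      rw [pow_succ' π (orderOf π - 1)]; rfl
    rw [this, Nat.sub_add_cancel (orderOf_pos π), pow_orderOf_eq_one, hj]
    rfl
  set ℓ := Nat.find hex with hℓdef
  have hℓ : (π ^ ℓ) i = j := Nat.find_spec hex
  set r : Fin (ℓ+1) → Fin (n+1) := fun t => (π ^ (t : ℕ)) i with hr
  have key : ∀ a b : ℕ, a < b → b ≤ ℓ → (π ^ a) i = (π ^ b) i → False := by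
    intro a b hab hbl heq
    have h1 : (π ^ (b - a)) i = i := by
      refine (π ^ a).injective ?_
      have : (π ^ a) ((π ^ (b - a)) i) = (π ^ (a + (b - a))) i := by
        rw [pow_add]; rfl
      rw [this, Nat.add_sub_cancel' (le_of_lt hab), ← heq]
    have h2 : (π ^ (ℓ - (b - a))) i = j := by
      have : (π ^ ℓ) i = (π ^ (ℓ - (b - a))) ((π ^ (b - a)) i) := by
        rw [← Equiv.Perm.mul_apply, ← pow_add, Nat.sub_add_cancel (by omega)]
      rw [h1] at this
      rw [← this, hℓ]
    exact Nat.find_min hex (by omega) h2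
  have rinj : Function.Injective r := by
    intro a b hab
    by_contra hne
    have hne' : (a : ℕ) ≠ (b : ℕ) := fun e => hne (Fin.ext e)
    rcases Nat.lt_or_gt_of_ne hne' with h | h
    · exact key a b h (Nat.lt_succ_iff.mp b.isLt) hab
    · exact key b a h (Nat.lt_succ_iff.mp a.isLt) hab.symm
  have hret : π (r (Fin.last ℓ)) = i := by
    show π ((π ^ ℓ) i) = i
    rw [hℓ, hj]
  refine ⟨ℓ, r, rinj, by simp [hr], ?_, ?_, ?_, ?_⟩
  · show (π ^ (ℓ : ℕ)) i = j
    exact hℓ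
  · intro t
    show π ((π ^ ((t : ℕ))) i) = (π ^ ((t : ℕ) + 1)) i
    rw [pow_succ' π]; rfl
  · rintro x hx
    obtain ⟨t, _, rfl⟩ := Finset.mem_image.mp hx
    rcases Nat.lt_or_ge ((t : ℕ) + 1) (ℓ + 1) with h | h
    · refine Finset.mem_image.mpr ⟨⟨(t : ℕ) + 1, h⟩, Finset.mem_univ _, ?_⟩
      show (π ^ ((t : ℕ) + 1)) i = π ((π ^ ((t : ℕ))) i)
      rw [pow_succ' π]; rfl
    · have ht : t = Fin.last ℓ := by
        have h2 := t.isLt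
        refine Fin.ext ?_
        rw [Fin.val_last]
        omega
      rw [ht, hret]
      exact Finset.mem_image.mpr ⟨0, Finset.mem_univ _, by simp [hr]⟩
  · rintro x hx
    obtain ⟨t, _, rfl⟩ := Finset.mem_image.mp hx
    rcases Nat.eq_zero_or_pos (t : ℕ) with h | h
    · have ht : r t = i := by
        show (π ^ ((t : ℕ))) i = i
        rw [h, pow_zero]; rfl
      rw [ht, show π⁻¹ i = j from by rw [← hj]; exact Equiv.symm_apply_apply π j]
      exact Finset.mem_image.mpr ⟨Fin.last ℓ, Finset.mem_univ _, hℓ⟩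
    · refine Finset.mem_image.mpr ⟨⟨(t : ℕ) - 1, by omega⟩, Finset.mem_univ _, ?_⟩
      show (π ^ ((t : ℕ) - 1)) i = π⁻¹ ((π ^ ((t : ℕ))) i)
      refine π.injective ?_
      rw [show π (π⁻¹ ((π ^ ((t : ℕ))) i)) = (π ^ ((t : ℕ))) i from π.apply_symm_apply _]
      show π ((π ^ ((t : ℕ) - 1)) i) = (π ^ ((t : ℕ))) i
      have : (t : ℕ) - 1 + 1 = (t : ℕ) := by omega
      rw [← this, pow_succ' π]; rfl

lemma adj_le_pow (hper : tropPer A = 0) (hdiag : ∀ i, A i i = 0) (i j : Fin (n+1)) :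
    tropAdj A i j ≤ tropPow A n i j := by
  rw [adj_apply]
  refine Finset.sup_le fun τ _ => ?_
  set π : Equiv.Perm (Fin (n+1)) :=
    (finSuccEquiv' j).trans ((Equiv.optionCongr τ).trans (finSuccEquiv' i).symm) with hπ
  have hπj : π j = i := by
    simp only [hπ, Equiv.trans_apply, finSuccEquiv'_at, Equiv.optionCongr_apply,
      Option.map_none, finSuccEquiv'_symm_none]
  have hπs : ∀ a, π (j.succAbove a) = i.succAbove (τ a) := by
    intro a
    simp only [hπ, Equiv.trans_apply, finSuccEquiv'_succAbove, Equiv.optionCongr_apply,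
      Option.map_some, finSuccEquiv'_symm_some]
  obtain ⟨ℓ, r, rinj, hr0, hrl, hstep, hc1, hc2⟩ := orbit_chain π hπj
  set C := Finset.univ.image r with hC
  have hℓn : ℓ ≤ n := by
    have := Fintype.card_le_of_injective r rinj
    simpa using this
  have hjC : j ∈ C := Finset.mem_image.mpr ⟨Fin.last ℓ, Finset.mem_univ _, hrl⟩
  have sum0 : ∑ a, A (j.succAbove a) (i.succAbove (τ a))
      = ∑ x ∈ Finset.univ.erase j, A x (π x) := by
    rw [← sum_succAbove j (fun x => A x (π x))]
    exact Finset.sum_congr rfl fun a _ => by rw [hπs]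
  have step2 : ∑ x ∈ C.erase j, A x (π x) = wWalk A r := by
    have h : C.erase j = (Finset.univ.image r).erase (r (Fin.last ℓ)) := by rw [hC, hrl]
    rw [h, sum_cycle_erase r rinj]
    exact Finset.sum_congr rfl fun t _ => by rw [hstep]
  set π' := offC π C hc1 hc2 with hπ'
  have houts : ∑ x ∈ Cᶜ, A x (π x) ≤ 0 := by
    have heq : ∑ x ∈ Cᶜ, A x (π x) = ∑ x ∈ Cᶜ, A x (π' x) :=
      Finset.sum_congr rfl fun x hx => by
        rw [hπ', offC_not_mem π C hc1 hc2 (Finset.mem_compl.mp hx)]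
    have hzero : ∑ x ∈ C, A x (π' x) = 0 :=
      Finset.sum_eq_zero fun x hx => by
        rw [hπ', offC_mem π C hc1 hc2 hx, hdiag]
    calc ∑ x ∈ Cᶜ, A x (π x) = ∑ x ∈ Cᶜ, A x (π' x) := heq
      _ = ∑ x ∈ C, A x (π' x) + ∑ x ∈ Cᶜ, A x (π' x) := by rw [hzero, zero_add]
      _ = ∑ x, A x (π' x) := Finset.sum_add_sum_compl C _
      _ ≤ 0 := perm_sum_le hper π'
  calc ∑ a, A (j.succAbove a) (i.succAbove (τ a))
      = ∑ x ∈ C.erase j, A x (π x) + ∑ x ∈ Cᶜ, A x (π x) := by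
        rw [sum0, split_erase_sum C j hjC]
    _ ≤ wWalk A r + 0 := by rw [step2]; exact add_le_add_right houts _
    _ = wWalk A r := add_zero _
    _ ≤ tropPow A ℓ (r 0) (r (Fin.last ℓ)) := walk_le_pow A r
    _ = tropPow A ℓ i j := by rw [hr0, hrl]
    _ ≤ tropPow A n i j := pow_mono A hdiag hℓn i j

/-- Part (iii), first equality. -/
lemma pow_eq_adj (hper : tropPer A = 0) (hdiag : ∀ i, A i i = 0) :
    tropPow A n = tropAdj A := by
  ext i j
  exact le_antisymm (pow_le_adj hper hdiag i j) (adj_le_pow hper hdiag i j)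

lemma diag_pow_zero (hper : tropPer A = 0) (hdiag : ∀ i, A i i = 0) (k : ℕ) (i : Fin (n+1)) :
    tropPow A k i i = 0 := by
  apply le_antisymm
  · rw [tropPow_apply]
    refine Finset.sup_le fun pf hpf => ?_
    simp only [walkSet, Finset.mem_filter] at hpf
    obtain ⟨p, hp0, hpm, hpw⟩ := wWalk_exists_NW pf
    rw [hpw]
    refine NW_closed hper hdiag k p ?_
    rw [hp0, hpm, hpf.2.1, hpf.2.2]
  · have h0 : tropPow A 0 i i = 0 := by simp [tropPow, tropId]
    rw [← h0]
    exact pow_mono A hdiag (Nat.zero_le k) i i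

lemma pow_n_idem (hper : tropPer A = 0) (hdiag : ∀ i, A i i = 0) :
    tropMul (tropPow A n) (tropPow A n) = tropPow A n := by
  rw [← tropPow_add A n n]
  exact pow_stab hper hdiag (Nat.le_add_right n n)

lemma pow_of_pow_n (hper : tropPer A = 0) (hdiag : ∀ i, A i i = 0) {k : ℕ} (hk : 1 ≤ k) :
    tropPow (tropPow A n) k = tropPow A n := by
  induction k with
  | zero => omega
  | succ k ih =>
    rcases Nat.eq_zero_or_pos k with rfl | hk'
    · show tropMul (tropPow (tropPow A n) 0) (tropPow A n) = tropPow A n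
      show tropMul (tropId _) (tropPow A n) = tropPow A n
      exact id_tropMul _
    · show tropMul (tropPow (tropPow A n) k) (tropPow A n) = tropPow A n
      rw [ih hk']
      exact pow_n_idem hper hdiag

lemma per_pow_le (hper : tropPer A = 0) (hdiag : ∀ i, A i i = 0)
    (π : Equiv.Perm (Fin (n+1))) : ∑ x, tropPow A n x (π x) ≤ 0 := by
  set B := tropPow A n with hB
  have hBdiag : ∀ i, B i i = 0 := diag_pow_zero hper hdiag n
  suffices H : ∀ (N : ℕ) (π : Equiv.Perm (Fin (n+1))),
      (Finset.univ.filter fun x => π x ≠ x).card ≤ N → ∑ x, B x (π x) ≤ 0 from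
    H _ π le_rfl
  intro N
  induction N with
  | zero =>
    intro π hcard
    have hfix : ∀ x, π x = x := by
      intro x
      by_contra hx
      have : x ∈ Finset.univ.filter fun x => π x ≠ x :=
        Finset.mem_filter.mpr ⟨Finset.mem_univ x, hx⟩
      have := Finset.card_pos.mpr ⟨x, this⟩
      omega
    refine le_of_eq (Finset.sum_eq_zero fun x _ => ?_)
    rw [hfix, hBdiag]
  | succ N ih =>
    intro π hcard
    by_cases hfix : ∀ x, π x = x
    · refine le_of_eq (Finset.sum_eq_zero fun x _ => ?_)
      rw [hfix, hBdiag]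
    · push_neg at hfix
      obtain ⟨i₀, hi₀⟩ := hfix
      have hj : π (π⁻¹ i₀) = i₀ := Equiv.apply_symm_apply π i₀
      obtain ⟨ℓ, r, rinj, hr0, hrl, hstep, hc1, hc2⟩ := orbit_chain π hj
      set C := Finset.univ.image r with hC
      have hi₀C : i₀ ∈ C := Finset.mem_image.mpr ⟨0, Finset.mem_univ _, hr0⟩
      have sumC : ∑ x ∈ C, B x (π x) ≤ 0 := by
        have h1 : ∑ x ∈ C, B x (π x) = ∑ t : Fin (ℓ+1), B (r t) (π (r t)) := by
          rw [hC, Finset.sum_image (fun a _ b _ h => rinj h)]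
        have h2 : ∑ t : Fin (ℓ+1), B (r t) (π (r t)) = wWalk B (Fin.snoc r i₀) := by
          unfold wWalk
          refine Finset.sum_congr rfl fun t _ => ?_
          rw [Fin.snoc_castSucc]
          congr 1
          rcases eq_or_ne t (Fin.last ℓ) with rfl | ht
          · rw [hrl, hj, Fin.succ_last, Fin.snoc_last]
          · obtain ⟨s, rfl⟩ := Fin.eq_castSucc_of_ne_last ht
            rw [hstep, Fin.succ_castSucc, Fin.snoc_castSucc]
        have h3 : wWalk B (Fin.snoc r i₀) ≤ tropPow B (ℓ+1) i₀ i₀ := by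
          have := walk_le_pow B (Fin.snoc r i₀)
          rwa [show (Fin.snoc r i₀ : Fin (ℓ+2) → Fin (n+1)) 0 = i₀ from ?_,
            Fin.snoc_last] at this
          rw [show (0 : Fin (ℓ+2)) = Fin.castSucc 0 by simp, Fin.snoc_castSucc, hr0]
        rw [h1, h2]
        refine le_trans h3 ?_
        rw [hB, pow_of_pow_n hper hdiag (Nat.le_add_left 1 ℓ)]
        exact le_of_eq (diag_pow_zero hper hdiag n i₀)
      have sumCc : ∑ x ∈ Cᶜ, B x (π x) ≤ 0 := by
        set π' := offC π C hc1 hc2 with hπ'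
        have heq : ∑ x ∈ Cᶜ, B x (π x) = ∑ x ∈ Cᶜ, B x (π' x) :=
          Finset.sum_congr rfl fun x hx => by
            rw [hπ', offC_not_mem π C hc1 hc2 (Finset.mem_compl.mp hx)]
        have hzero : ∑ x ∈ C, B x (π' x) = 0 :=
          Finset.sum_eq_zero fun x hx => by
            rw [hπ', offC_mem π C hc1 hc2 hx, hBdiag]
        have hcard' : (Finset.univ.filter fun x => π' x ≠ x).card ≤ N := by
          have hsub : (Finset.univ.filter fun x => π' x ≠ x)
              ⊆ (Finset.univ.filter fun x => π x ≠ x).erase i₀ := by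
            intro x hx
            have hx' : π' x ≠ x := (Finset.mem_filter.mp hx).2
            have hxC : x ∉ C := by
              intro h
              exact hx' (offC_mem π C hc1 hc2 h)
            refine Finset.mem_erase.mpr ⟨fun h => hxC (h ▸ hi₀C), ?_⟩
            refine Finset.mem_filter.mpr ⟨Finset.mem_univ x, ?_⟩
            rwa [hπ', offC_not_mem π C hc1 hc2 hxC] at hx'
          have hmem : i₀ ∈ Finset.univ.filter fun x => π x ≠ x :=
            Finset.mem_filter.mpr ⟨Finset.mem_univ _, hi₀⟩
          have := Finset.card_le_card hsub
          rw [Finset.card_erase_of_mem hmem] at this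
          omega
        calc ∑ x ∈ Cᶜ, B x (π x) = ∑ x ∈ Cᶜ, B x (π' x) := heq
          _ = ∑ x ∈ C, B x (π' x) + ∑ x ∈ Cᶜ, B x (π' x) := by rw [hzero, zero_add]
          _ = ∑ x, B x (π' x) := Finset.sum_add_sum_compl C _
          _ ≤ 0 := ih π' hcard'
      calc ∑ x, B x (π x) = ∑ x ∈ C, B x (π x) + ∑ x ∈ Cᶜ, B x (π x) :=
            (Finset.sum_add_sum_compl C _).symm
        _ ≤ 0 + 0 := add_le_add sumC sumCc
        _ = 0 := add_zero 0

lemma per_pow (hper : tropPer A = 0) (hdiag : ∀ i, A i i = 0) :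
    tropPer (tropPow A n) = 0 := by
  apply le_antisymm
  · exact Finset.sup_le fun π _ => per_pow_le hper hdiag π
  · have : ∑ x, tropPow A n x ((1 : Equiv.Perm (Fin (n+1))) x) = 0 := by
      refine Finset.sum_eq_zero fun x _ => ?_
      show tropPow A n x x = 0
      exact diag_pow_zero hper hdiag n x
    rw [← this]
    exact Finset.le_sup (f := fun σ : Equiv.Perm (Fin (n+1)) => ∑ x, tropPow A n x (σ x))
      (Finset.mem_univ 1)


lemma adj_eq_qinv (hper : tropPer A = 0) : tropAdj A = tropQInv A := by
  ext i j
  show tropAdj A i j = tropAdj A i j + ((- ((tropPer A).unbotD 0) : ℝ) : Rmax)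
  rw [hper]
  show tropAdj A i j = tropAdj A i j + ((- ((((0:ℝ) : Rmax)).unbotD 0) : ℝ) : Rmax)
  rw [WithBot.unbotD_coe, neg_zero, WithBot.coe_zero, add_zero]


theorem final (hper : tropPer A = 0) (hdiag : ∀ i, A i i = 0) :
    (∀ (m : ℕ) (c : Fin (m+1) → Fin (n+1)), Function.Injective c →
        ∑ t, A (c t) (c (t + 1)) ≤ 0) ∧
    (∀ k, n ≤ k → tropPow A k = tropPow A n) ∧
    tropPow A n = tropAdj A ∧
    tropAdj A = tropQInv A ∧
    tropQInv A = tropQInv (tropQInv A) := by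
  refine ⟨fun m c hc => cycle_le hper hdiag m c hc,
    fun k hk => pow_stab hper hdiag hk,
    pow_eq_adj hper hdiag,
    adj_eq_qinv hper, ?_⟩
  have hBA : tropQInv A = tropPow A n := by
    rw [← adj_eq_qinv hper, ← pow_eq_adj hper hdiag]
  have hBper : tropPer (tropPow A n) = 0 := per_pow hper hdiag
  have hBdiag : ∀ i, tropPow A n i i = 0 := diag_pow_zero hper hdiag n
  have hQB : tropQInv (tropPow A n) = tropPow A n := by
    rw [← adj_eq_qinv hBper, ← pow_eq_adj hBper hBdiag]
    rcases Nat.eq_zero_or_pos n with rfl | hn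
    · rfl
    · exact pow_of_pow_n hper hdiag hn
  rw [hBA, hQB]

end TropAux

/-- for a definite matrix `A` (`per(A) = 0` and zero diagonal):
(i) every cycle has nonpositive weight; (ii) tropical powers stabilize from
exponent `n−1` on; (iii) `A^{⊙(n−1)} = adj(A) = A^∇ = (A^∇)^∇`.
(The matrix here has size `n+1`, so `n` plays the role of `n−1`.) -/
theorem definite_powers_adj {n : ℕ} (A : Matrix (Fin (n+1)) (Fin (n+1)) Rmax)
    (hper : tropPer A = 0) (hdiag : ∀ i, A i i = 0) :
    (∀ (m : ℕ) (c : Fin (m+1) → Fin (n+1)), Function.Injective c →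
        ∑ t, A (c t) (c (t + 1)) ≤ 0) ∧
    (∀ k, n ≤ k → tropPow A k = tropPow A n) ∧
    tropPow A n = tropAdj A ∧
    tropAdj A = tropQInv A ∧
    tropQInv A = tropQInv (tropQInv A) := by
  exact TropAux.final hper hdiag
end
end

section
/- Over the max-plus semiring, for every n×n matrix A over ℝ_max, every m ≥ 1, and every k with 1 ≤ k ≤ n, the compound of the power dominates the power of the compound: (A^{⊙m})^{∧k} ≥ (A^{∧k})^{⊙m} entrywise. -/
open Matrix

noncomputable section

lemma tropMul_mono_left {l m p : Type*} [Fintype m] {A A' : Matrix l m Rmax}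
    (B : Matrix m p Rmax) (h : ∀ i j, A i j ≤ A' i j) (i : l) (j : p) :
    tropMul A B i j ≤ tropMul A' B i j := by
  apply Finset.sup_mono_fun
  intro t _
  exact add_le_add_left (h i t) _

lemma compound_mul_le {n k : ℕ} (A B : Matrix (Fin n) (Fin n) Rmax) (I J : KSub n k) :
    tropMul (compound k A) (compound k B) I J ≤ compound k (tropMul A B) I J := by
  show (Finset.univ.sup fun K : KSub n k => compound k A I K + compound k B K J) ≤ _
  apply Finset.sup_le
  intro K _
  have hIK : Nonempty ({x // x ∈ I.1} ≃ {x // x ∈ K.1}) :=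
    ⟨Fintype.equivOfCardEq (by simp [Fintype.card_coe, I.2, K.2])⟩
  have hKJ : Nonempty ({x // x ∈ K.1} ≃ {x // x ∈ J.1}) :=
    ⟨Fintype.equivOfCardEq (by simp [Fintype.card_coe, K.2, J.2])⟩
  obtain ⟨σ, -, hσ⟩ := Finset.exists_mem_eq_sup Finset.univ Finset.univ_nonempty
    (fun σ : {x // x ∈ I.1} ≃ {x // x ∈ K.1} => ∑ i, A i.1 (σ i).1)
  obtain ⟨τ, -, hτ⟩ := Finset.exists_mem_eq_sup Finset.univ Finset.univ_nonempty
    (fun τ : {x // x ∈ K.1} ≃ {x // x ∈ J.1} => ∑ i, B i.1 (τ i).1)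
  show (compound k A I K) + (compound k B K J) ≤ _
  rw [show compound k A I K = ∑ i, A i.1 (σ i).1 from hσ,
      show compound k B K J = ∑ i, B i.1 (τ i).1 from hτ]
  refine le_trans ?_ (Finset.le_sup (f := fun ρ : {x // x ∈ I.1} ≃ {x // x ∈ J.1} =>
    ∑ i : {x // x ∈ I.1}, tropMul A B i.1 (ρ i).1) (Finset.mem_univ (σ.trans τ)))
  have hsum : (∑ i : {x // x ∈ K.1}, B i.1 (τ i).1)
      = ∑ i : {x // x ∈ I.1}, B (σ i).1 (τ (σ i)).1 :=
    (Equiv.sum_comp σ (fun i => B i.1 (τ i).1)).symm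
  rw [hsum, ← Finset.sum_add_distrib]
  apply Finset.sum_le_sum
  intro i _
  exact Finset.le_sup (f := fun t => A i.1 t + B t (τ (σ i)).1) (Finset.mem_univ (σ i).1)

lemma tropId_le_compound_tropId {n k : ℕ} (I J : KSub n k) :
    tropId (KSub n k) I J ≤ compound k (tropId (Fin n)) I J := by
  by_cases h : I = J
  · subst h
    have h0 : tropId (KSub n k) I I = 0 := if_pos rfl
    rw [h0]
    refine le_trans ?_ (Finset.le_sup (f := fun σ : {x // x ∈ I.1} ≃ {x // x ∈ I.1} =>
      ∑ i : {x // x ∈ I.1}, tropId (Fin n) i.1 (σ i).1) (Finset.mem_univ (Equiv.refl _)))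
    simp [tropId]
  · have h0 : tropId (KSub n k) I J = ⊥ := if_neg h
    rw [h0]
    exact bot_le

/-- `(A^{⊙m})^{∧k} ≥ (A^{∧k})^{⊙m}` entrywise. -/
theorem compound_pow_ge {n : ℕ} (A : Matrix (Fin n) (Fin n) Rmax)
    (m : ℕ) (hm : 1 ≤ m) (k : ℕ) (hk1 : 1 ≤ k) (hk2 : k ≤ n)
    (I J : KSub n k) :
    tropPow (compound k A) m I J ≤ compound k (tropPow A m) I J := by
  clear hm hk1 hk2
  induction m generalizing I J with
  | zero => exact tropId_le_compound_tropId I J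
  | succ m ih =>
    calc tropPow (compound k A) (m + 1) I J
        = tropMul (tropPow (compound k A) m) (compound k A) I J := rfl
      _ ≤ tropMul (compound k (tropPow A m)) (compound k A) I J :=
          tropMul_mono_left _ (fun I J => ih I J) I J
      _ ≤ compound k (tropMul (tropPow A m) A) I J := compound_mul_le _ _ I J
      _ = compound k (tropPow A (m + 1)) I J := rfl
end
end

section
/- Over the max-plus semiring, if A is a nonsingular n×n matrix over ℝ_max (per(A) > −∞), then per(adj(A)) = (n−1)·per(A), per(A ⊙ adj(A)) = n·per(A), and per(A^∇) = −per(A), where all products and multiples are taken in the usual arithmetic of ℝ (tropical powers). -/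
open Matrix

noncomputable section

/-! ### Auxiliary lemmas -/

lemma perm_sum_le {m : Type*} [Fintype m] [DecidableEq m] (A : Matrix m m Rmax)
    (σ : Equiv.Perm m) : ∑ i, A i (σ i) ≤ tropPer A :=
  Finset.le_sup (f := fun σ : Equiv.Perm _ => ∑ i, A i (σ i)) (Finset.mem_univ σ)

/-- A `k`-regular ℕ-weighting of entries of `A` has total (tropical) weight at most
`k • tropPer A`.  Proved by induction on `k` via Hall's marriage theorem. -/
lemma key {m : Type*} [Fintype m] [DecidableEq m] (A : Matrix m m Rmax) :
    ∀ (k : ℕ) (w : m → m → ℕ), (∀ r, ∑ c, w r c = k) → (∀ c, ∑ r, w r c = k) →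
    ∑ r, ∑ c, w r c • A r c ≤ k • tropPer A := by
  intro k
  induction k with
  | zero =>
    intro w hr _
    have hw : ∀ r c, w r c = 0 := by
      intro r c
      exact Finset.sum_eq_zero_iff.mp (hr r) c (Finset.mem_univ c)
    simp [hw]
  | succ k ih =>
    intro w hr hc
    set N : m → Finset m := fun r => Finset.univ.filter fun c => 0 < w r c with hN
    have hall : ∀ S : Finset m, S.card ≤ (S.biUnion N).card := by
      intro S
      have h1 : ∀ r, ∑ c ∈ N r, w r c = k + 1 := by
        intro r
        rw [← hr r]
        refine Finset.sum_subset (Finset.filter_subset _ _)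
          (fun c _ hcn => ?_)
        simp only [hN, Finset.mem_filter, Finset.mem_univ, true_and, not_lt,
          Nat.le_zero] at hcn
        exact hcn
      have h2 : (k+1) * S.card ≤ (k+1) * (S.biUnion N).card := by
        calc (k+1) * S.card = ∑ _r ∈ S, (k+1) := by simp [Finset.sum_const, mul_comm]
          _ = ∑ r ∈ S, ∑ c ∈ N r, w r c := by
              refine Finset.sum_congr rfl fun r _ => (h1 r).symm
          _ ≤ ∑ r ∈ S, ∑ c ∈ S.biUnion N, w r c := by
              refine Finset.sum_le_sum fun r hrS => ?_
              exact Finset.sum_le_sum_of_subset (fun c hcN =>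
                Finset.mem_biUnion.mpr ⟨r, hrS, hcN⟩)
          _ = ∑ c ∈ S.biUnion N, ∑ r ∈ S, w r c := Finset.sum_comm
          _ ≤ ∑ c ∈ S.biUnion N, ∑ r, w r c := by
              refine Finset.sum_le_sum fun c _ => ?_
              exact Finset.sum_le_sum_of_subset (Finset.subset_univ S)
          _ = ∑ c ∈ S.biUnion N, (k+1) := by
              refine Finset.sum_congr rfl fun c _ => hc c
          _ = (k+1) * (S.biUnion N).card := by simp [Finset.sum_const, mul_comm]
      exact Nat.le_of_mul_le_mul_left h2 (Nat.succ_pos k)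
    obtain ⟨f, hfinj, hfmem⟩ := (Finset.all_card_le_biUnion_card_iff_exists_injective N).mp hall
    have hfbij : Function.Bijective f := Finite.injective_iff_bijective.mp hfinj
    let σ : Equiv.Perm m := Equiv.ofBijective f hfbij
    have hσ : ∀ r, 0 < w r (σ r) := by
      intro r
      have := hfmem r
      simp [hN] at this
      exact this
    set w' : m → m → ℕ := fun r c => w r c - (if c = σ r then 1 else 0) with hw'
    have hsplit : ∀ r c, w r c = w' r c + (if c = σ r then 1 else 0) := by
      intro r c
      have := hσ r
      by_cases h : c = σ r <;> simp [hw', h] <;> omega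
    have hite : ∀ r, ∑ c, (if c = σ r then 1 else 0) = 1 := by
      intro r; simp
    have hr' : ∀ r, ∑ c, w' r c = k := by
      intro r
      have h1 : ∑ c, w r c = (∑ c, w' r c) + ∑ c, (if c = σ r then 1 else 0) := by
        rw [← Finset.sum_add_distrib]
        exact Finset.sum_congr rfl fun c _ => hsplit r c
      rw [hr r, hite r] at h1; omega
    have hc' : ∀ c, ∑ r, w' r c = k := by
      intro c
      have hite2 : ∑ r, (if c = σ r then 1 else 0) = 1 := by
        have : ∀ r : m, (if c = σ r then (1:ℕ) else 0) = if r = σ.symm c then 1 else 0 := by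
          intro r
          congr 1
          rw [eq_comm (a := c), Equiv.eq_symm_apply]
        simp_rw [this]
        simp
      have h1 : ∑ r, w r c = (∑ r, w' r c) + ∑ r, (if c = σ r then 1 else 0) := by
        rw [← Finset.sum_add_distrib]
        exact Finset.sum_congr rfl fun r _ => hsplit r c
      rw [hc c, hite2] at h1; omega
    calc ∑ r, ∑ c, w r c • A r c
        = ∑ r, ∑ c, (w' r c • A r c + (if c = σ r then 1 else 0) • A r c) := by
          refine Finset.sum_congr rfl fun r _ => Finset.sum_congr rfl fun c _ => ?_
          rw [hsplit r c, add_smul]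
      _ = (∑ r, ∑ c, w' r c • A r c) + ∑ r, ∑ c, (if c = σ r then 1 else 0) • A r c := by
          rw [← Finset.sum_add_distrib]
          exact Finset.sum_congr rfl fun r _ => Finset.sum_add_distrib
      _ = (∑ r, ∑ c, w' r c • A r c) + ∑ r, A r (σ r) := by
          congr 1
          refine Finset.sum_congr rfl fun r _ => ?_
          have : ∀ c : m, (if c = σ r then (1:ℕ) else 0) • A r c
              = if c = σ r then A r c else 0 := by
            intro c; split <;> simp
          simp_rw [this]
          simp
      _ ≤ k • tropPer A + tropPer A := add_le_add (ih w' hr' hc') (perm_sum_le A σ)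
      _ = (k+1) • tropPer A := (succ_nsmul _ _).symm

/-- Edge-multiset version of `key`. -/
lemma keyEdges {m ι : Type*} [Fintype m] [DecidableEq m] [Fintype ι] [DecidableEq ι]
    (A : Matrix m m Rmax) (k : ℕ) (e : ι → m × m)
    (hrow : ∀ r, (Finset.univ.filter fun x => (e x).1 = r).card = k)
    (hcol : ∀ c, (Finset.univ.filter fun x => (e x).2 = c).card = k) :
    ∑ x, A (e x).1 (e x).2 ≤ k • tropPer A := by
  set w : m → m → ℕ := fun r c => (Finset.univ.filter fun x => e x = (r, c)).card with hw
  have hsum : ∑ x, A (e x).1 (e x).2 = ∑ r, ∑ c, w r c • A r c := by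
    rw [← Fintype.sum_prod_type (f := fun rc : m × m => w rc.1 rc.2 • A rc.1 rc.2)]
    rw [← Finset.sum_fiberwise Finset.univ e (fun x => A (e x).1 (e x).2)]
    refine Finset.sum_congr rfl fun rc _ => ?_
    have : ∑ x ∈ Finset.univ.filter (fun x => e x = rc), A (e x).1 (e x).2
        = ∑ _x ∈ Finset.univ.filter (fun x => e x = rc), A rc.1 rc.2 := by
      refine Finset.sum_congr rfl fun x hx => ?_
      rw [(Finset.mem_filter.mp hx).2]
    rw [this, Finset.sum_const]
  rw [hsum]
  refine key A k w ?_ ?_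
  · intro r
    have : ∀ x : ι, (∑ c, if e x = (r, c) then 1 else 0) = if (e x).1 = r then 1 else 0 := by
      intro x
      obtain ⟨a, b⟩ := e x
      by_cases h : a = r
      · subst h; simp [Prod.ext_iff]
      · simp [Prod.ext_iff, h]
    simp_rw [hw, Finset.card_filter]
    rw [Finset.sum_comm]
    simp_rw [this]
    rw [← Finset.card_filter]
    exact hrow r
  · intro c
    have : ∀ x : ι, (∑ r, if e x = (r, c) then 1 else 0) = if (e x).2 = c then 1 else 0 := by
      intro x
      obtain ⟨a, b⟩ := e x
      by_cases h : b = c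
      · subst h; simp [Prod.ext_iff]
      · simp [Prod.ext_iff, h]
    simp_rw [hw, Finset.card_filter]
    rw [Finset.sum_comm]
    simp_rw [this]
    rw [← Finset.card_filter]
    exact hcol c

lemma count_succAbove' {n : ℕ} (j r : Fin (n+1)) (τ : Equiv.Perm (Fin n)) :
    (Finset.univ.filter fun t => j.succAbove (τ t) = r).card = if r = j then 0 else 1 := by
  have himg : (Finset.univ.filter fun t => j.succAbove (τ t) = r)
      = Finset.image τ.symm (Finset.univ.filter fun s => j.succAbove s = r) := by
    ext t
    simp only [Finset.mem_filter, Finset.mem_univ, true_and, Finset.mem_image]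
    constructor
    · intro h; exact ⟨τ t, h, τ.symm_apply_apply t⟩
    · rintro ⟨s, hs, rfl⟩; rwa [τ.apply_symm_apply]
  rw [himg, Finset.card_image_of_injective _ τ.symm.injective]
  split
  · next h =>
    subst h
    rw [Finset.card_eq_zero, Finset.filter_eq_empty_iff]
    intro s _
    exact Fin.succAbove_ne _ s
  · next h =>
    obtain ⟨t0, ht0⟩ := Fin.exists_succAbove_eq h
    rw [Finset.card_eq_one]
    refine ⟨t0, ?_⟩
    ext s
    simp only [Finset.mem_filter, Finset.mem_univ, true_and, Finset.mem_singleton]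
    constructor
    · intro hs
      exact Fin.succAbove_right_injective (hs.trans ht0.symm)
    · rintro rfl; exact ht0

lemma sum_ite_ne {n : ℕ} (ρ : Equiv.Perm (Fin (n+1))) (r : Fin (n+1)) :
    (∑ i, if r = ρ i then 0 else 1) = n := by
  have h1 : ((∑ i, if r = ρ i then (0:ℕ) else 1) + ∑ i, if r = ρ i then 1 else 0) = n+1 := by
    rw [← Finset.sum_add_distrib]
    have : ∀ i : Fin (n+1),
        ((if r = ρ i then (0:ℕ) else 1) + if r = ρ i then 1 else 0) = 1 := by
      intro i; split <;> rfl
    simp_rw [this]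
    simp
  have h2 : (∑ i, if r = ρ i then (1:ℕ) else 0) = 1 := by
    have : ∀ i : Fin (n+1), (if r = ρ i then (1:ℕ) else 0) = if i = ρ.symm r then 1 else 0 := by
      intro i
      refine if_congr ⟨fun h => by rw [h, Equiv.symm_apply_apply],
        fun h => by rw [h, Equiv.apply_symm_apply]⟩ rfl rfl
    simp_rw [this]
    simp
  omega

/-- restriction of a permutation of `Fin (n+1)` to a permutation of `Fin n` via `succAbove` -/
def minorPerm {n : ℕ} (σ : Equiv.Perm (Fin (n+1))) (j : Fin (n+1)) : Equiv.Perm (Fin n) :=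
  (finSuccAboveEquiv j).trans
    ((σ.subtypeEquiv fun _ => not_congr (Equiv.apply_eq_iff_eq σ).symm).trans
      (finSuccAboveEquiv (σ j)).symm)

lemma minorPerm_spec {n : ℕ} (σ : Equiv.Perm (Fin (n+1))) (j : Fin (n+1)) (t : Fin n) :
    (σ j).succAbove (minorPerm σ j t) = σ (j.succAbove t) := by
  have h1 : (finSuccAboveEquiv (σ j)) (minorPerm σ j t)
      = ⟨σ (j.succAbove t), by
          simp only [Ne, Equiv.apply_eq_iff_eq]
          exact Fin.succAbove_ne j t⟩ := by
    simp only [minorPerm, Equiv.trans_apply, Equiv.apply_symm_apply]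
    simp [finSuccAboveEquiv_apply, Equiv.subtypeEquiv_apply]
  have := congrArg Subtype.val h1
  rwa [finSuccAboveEquiv_apply] at this

lemma coe_sum {α : Type*} [DecidableEq α] (s : Finset α) (g : α → ℝ) :
    ((∑ i ∈ s, g i : ℝ) : Rmax) = ∑ i ∈ s, ((g i : ℝ) : Rmax) := by
  induction s using Finset.induction with
  | empty => simp
  | @insert a s h ih => rw [Finset.sum_insert h, Finset.sum_insert h, WithBot.coe_add, ih]

lemma coe_nsmul (k : ℕ) (q : ℝ) : (k • (q : Rmax)) = ((k * q : ℝ) : Rmax) := by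
  induction k with
  | zero => simp
  | succ k ih => rw [succ_nsmul, ih, ← WithBot.coe_add]; congr 1; push_cast; ring

lemma sup_attained {α : Type*} [Fintype α] [Nonempty α] (f : α → Rmax) :
    ∃ a, Finset.univ.sup f = f a := by
  obtain ⟨a, _, ha⟩ := Finset.exists_mem_eq_sup Finset.univ Finset.univ_nonempty f
  exact ⟨a, ha⟩

lemma sum_ne_bot {α : Type*} [Fintype α] [DecidableEq α] (f : α → Rmax) (i : α)
    (h : f i = ⊥) : ∑ j, f j = ⊥ := by
  rw [← Finset.add_sum_erase _ f (Finset.mem_univ i), h, WithBot.bot_add]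

lemma sup_add_const {α : Type*} [Fintype α] [Nonempty α] (f : α → Rmax) (c : Rmax) :
    (Finset.univ.sup fun a => f a + c) = Finset.univ.sup f + c := by
  refine le_antisymm (Finset.sup_le fun a _ =>
    add_le_add_left (Finset.le_sup (Finset.mem_univ a)) c) ?_
  obtain ⟨a, ha⟩ := sup_attained f
  rw [ha]
  exact Finset.le_sup (f := fun a => f a + c) (Finset.mem_univ a)

set_option maxHeartbeats 2000000 in
/-- for `A` nonsingular of size `n+1`:
`per(adj(A)) = n ⊙ per(A)`, `per(A ⊙ adj(A)) = (n+1) ⊙ per(A)`, and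
`per(A^∇) = −per(A)`. -/
theorem tropPer_adj_qinv {n : ℕ} (A : Matrix (Fin (n+1)) (Fin (n+1)) Rmax)
    (p : ℝ) (hp : tropPer A = (p : Rmax)) :
    tropPer (tropAdj A) = n • tropPer A ∧
    tropPer (tropMul A (tropAdj A)) = (n + 1) • tropPer A ∧
    tropPer (tropQInv A) = ((-p : ℝ) : Rmax) := by
  classical
  -- the optimal permutation
  obtain ⟨σs, hσs⟩ := sup_attained (fun σ : Equiv.Perm (Fin (n+1)) => ∑ i, A i (σ i))
  have hsum : ∑ i, A i (σs i) = (p : Rmax) := by rw [← hσs]; exact hp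
  have hne : ∀ i, A i (σs i) ≠ ⊥ := by
    intro i h
    rw [sum_ne_bot _ i h] at hsum
    exact absurd hsum (by simp)
  have hbex : ∀ i, ∃ x : ℝ, A i (σs i) = (x : Rmax) := by
    intro i
    rcases WithBot.ne_bot_iff_exists.mp (hne i) with ⟨x, hx⟩
    exact ⟨x, hx.symm⟩
  choose b hb using hbex
  have hbp : ∑ i, b i = p := by
    have h2 : ((∑ i, b i : ℝ) : Rmax) = (p : Rmax) := by
      rw [coe_sum]
      simp_rw [← hb]
      exact hsum
    exact_mod_cast h2
  -- key lower bound on adjoint entries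
  have hadj_ge : ∀ j, (((p - b j : ℝ)) : Rmax) ≤ tropAdj A (σs j) j := by
    intro j
    have hle : ∑ t, A (j.succAbove t) (σs (j.succAbove t)) ≤ tropAdj A (σs j) j := by
      have h0 : ∑ t, A (j.succAbove t) ((σs j).succAbove (minorPerm σs j t))
          ≤ tropPer (A.submatrix j.succAbove (σs j).succAbove) :=
        perm_sum_le (A.submatrix j.succAbove (σs j).succAbove) (minorPerm σs j)
      simp_rw [minorPerm_spec] at h0
      exact h0
    have heq : (b j : Rmax) + ∑ t, A (j.succAbove t) (σs (j.succAbove t)) = (p : Rmax) := by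
      rw [← hb j, ← hsum]
      exact (Fin.sum_univ_succAbove (fun x => A x (σs x)) j).symm
    set S := ∑ t, A (j.succAbove t) (σs (j.succAbove t)) with hS
    have hSne : S ≠ ⊥ := by
      intro hbot
      rw [hbot] at heq
      simp at heq
    rcases WithBot.ne_bot_iff_exists.mp hSne with ⟨s, hs⟩
    rw [← hs] at heq
    rw [← WithBot.coe_add] at heq
    have hval : b j + s = p := by exact_mod_cast heq
    have : ((p - b j : ℝ) : Rmax) = S := by rw [← hs]; congr 1; linarith
    rw [this]
    exact hle
  -- Part 1: upper bound
  have hup1 : tropPer (tropAdj A) ≤ n • tropPer A := by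
    refine Finset.sup_le fun ρ _ => ?_
    have hex : ∀ i : Fin (n+1), ∃ τ : Equiv.Perm (Fin n),
        tropAdj A i (ρ i) = ∑ t, A ((ρ i).succAbove t) (i.succAbove (τ t)) := by
      intro i
      obtain ⟨τ, hτ⟩ := sup_attained (fun τ : Equiv.Perm (Fin n) =>
        ∑ t, (A.submatrix (ρ i).succAbove i.succAbove) t (τ t))
      exact ⟨τ, hτ⟩
    choose τ hτ using hex
    calc ∑ i, tropAdj A i (ρ i)
        = ∑ i, ∑ t, A ((ρ i).succAbove t) (i.succAbove (τ i t)) :=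
          Finset.sum_congr rfl fun i _ => hτ i
      _ = ∑ x : Fin (n+1) × Fin n, A ((ρ x.1).succAbove x.2) (x.1.succAbove (τ x.1 x.2)) :=
          (Fintype.sum_prod_type (f := fun x : Fin (n+1) × Fin n =>
            A ((ρ x.1).succAbove x.2) (x.1.succAbove (τ x.1 x.2)))).symm
      _ ≤ n • tropPer A := by
          refine keyEdges A n
            (fun x : Fin (n+1) × Fin n =>
              ((ρ x.1).succAbove x.2, x.1.succAbove (τ x.1 x.2))) ?_ ?_
          · intro r
            rw [Finset.card_filter, Fintype.sum_prod_type]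
            have : ∀ i : Fin (n+1),
                (∑ t : Fin n, if (ρ i).succAbove t = r then (1:ℕ) else 0)
                = if r = ρ i then 0 else 1 := by
              intro i
              rw [← Finset.card_filter]
              convert count_succAbove' (ρ i) r (Equiv.refl (Fin n)) <;> rfl
            simp_rw [this]
            exact sum_ite_ne ρ r
          · intro c
            rw [Finset.card_filter, Fintype.sum_prod_type]
            have : ∀ i : Fin (n+1),
                (∑ t : Fin n, if i.succAbove (τ i t) = c then (1:ℕ) else 0)
                = if c = i then 0 else 1 := by
              intro i
              rw [← Finset.card_filter]
              exact count_succAbove' i c (τ i)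
            simp_rw [this]
            convert sum_ite_ne (Equiv.refl (Fin (n+1))) c <;> rfl
  -- Part 1: lower bound
  have hlo1 : ((n * p : ℝ) : Rmax) ≤ tropPer (tropAdj A) := by
    have h1 : ∑ i, tropAdj A i (σs.symm i) ≤ tropPer (tropAdj A) :=
      perm_sum_le (tropAdj A) σs.symm
    have h2 : ∑ j, tropAdj A (σs j) j = ∑ i, tropAdj A i (σs.symm i) := by
      rw [← Equiv.sum_comp σs (fun i => tropAdj A i (σs.symm i))]
      simp
    have h3 : ((n * p : ℝ) : Rmax) ≤ ∑ j, tropAdj A (σs j) j := by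
      have hcoe : ((n * p : ℝ) : Rmax) = ∑ j, (((p - b j : ℝ)) : Rmax) := by
        rw [← coe_sum]
        congr 1
        rw [Finset.sum_sub_distrib, Finset.sum_const, hbp]
        simp
        ring
      rw [hcoe]
      exact Finset.sum_le_sum fun j _ => hadj_ge j
    exact h3.trans (h2.le.trans h1)
  have part1 : tropPer (tropAdj A) = n • tropPer A := by
    refine le_antisymm hup1 ?_
    rw [hp, coe_nsmul]
    exact hlo1
  -- Part 2: lower bound
  have hdiag : ∀ i, (p : Rmax) ≤ tropMul A (tropAdj A) i i := by
    intro i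
    have h1 : A i (σs i) + tropAdj A (σs i) i ≤ tropMul A (tropAdj A) i i :=
      Finset.le_sup (f := fun t => A i t + tropAdj A t i) (Finset.mem_univ (σs i))
    refine le_trans ?_ h1
    rw [hb i]
    calc ((p : ℝ) : Rmax) = ((b i : ℝ) : Rmax) + ((p - b i : ℝ) : Rmax) := by
          rw [← WithBot.coe_add]; congr 1; ring
      _ ≤ ((b i : ℝ) : Rmax) + tropAdj A (σs i) i := add_le_add_right (hadj_ge i) _
  have hlo2 : (((n+1) * p : ℝ) : Rmax) ≤ tropPer (tropMul A (tropAdj A)) := by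
    have h1 : ∑ i, tropMul A (tropAdj A) i i ≤ tropPer (tropMul A (tropAdj A)) := by
      have := perm_sum_le (tropMul A (tropAdj A)) (Equiv.refl (Fin (n+1)))
      simpa using this
    refine le_trans ?_ h1
    calc (((n+1) * p : ℝ) : Rmax) = ∑ _i : Fin (n+1), ((p : ℝ) : Rmax) := by
          rw [← coe_sum]
          congr 1
          rw [Finset.sum_const]
          simp [mul_comm]
      _ ≤ ∑ i, tropMul A (tropAdj A) i i := Finset.sum_le_sum fun i _ => hdiag i
  -- Part 2: upper bound
  have hup2 : tropPer (tropMul A (tropAdj A)) ≤ (n+1) • tropPer A := by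
    refine Finset.sup_le fun ρ _ => ?_
    have hex1 : ∀ i : Fin (n+1), ∃ t : Fin (n+1),
        tropMul A (tropAdj A) i (ρ i) = A i t + tropAdj A t (ρ i) := by
      intro i
      obtain ⟨t, ht⟩ := sup_attained (fun t => A i t + tropAdj A t (ρ i))
      exact ⟨t, ht⟩
    choose t ht using hex1
    have hex2 : ∀ i : Fin (n+1), ∃ τ : Equiv.Perm (Fin n),
        tropAdj A (t i) (ρ i) = ∑ s, A ((ρ i).succAbove s) ((t i).succAbove (τ s)) := by
      intro i
      obtain ⟨τ, hτ⟩ := sup_attained (fun τ : Equiv.Perm (Fin n) =>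
        ∑ s, (A.submatrix (ρ i).succAbove (t i).succAbove) s (τ s))
      exact ⟨τ, hτ⟩
    choose τ hτ using hex2
    set e : Fin (n+1) × Option (Fin n) → Fin (n+1) × Fin (n+1) := fun x =>
      Option.rec (x.1, t x.1)
        (fun s => ((ρ x.1).succAbove s, (t x.1).succAbove (τ x.1 s))) x.2 with he
    calc ∑ i, tropMul A (tropAdj A) i (ρ i)
        = ∑ i, (A i (t i) + ∑ s, A ((ρ i).succAbove s) ((t i).succAbove (τ i s))) := by
          refine Finset.sum_congr rfl fun i _ => ?_
          rw [ht i, hτ i]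
      _ = ∑ x : Fin (n+1) × Option (Fin n), A (e x).1 (e x).2 := by
          rw [Fintype.sum_prod_type (f := fun x : Fin (n+1) × Option (Fin n) =>
            A (e x).1 (e x).2)]
          refine Finset.sum_congr rfl fun i _ => ?_
          rw [Fintype.sum_option (f := fun o : Option (Fin n) => A (e (i, o)).1 (e (i, o)).2)]
      _ ≤ (n+1) • tropPer A := by
          refine keyEdges A (n+1) e ?_ ?_
          · intro r
            rw [Finset.card_filter, Fintype.sum_prod_type]
            have : ∀ i : Fin (n+1),
                (∑ o : Option (Fin n), if (e (i, o)).1 = r then (1:ℕ) else 0)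
                = (if i = r then 1 else 0) + (if r = ρ i then 0 else 1) := by
              intro i
              rw [Fintype.sum_option (f := fun o : Option (Fin n) =>
                if (e (i, o)).1 = r then (1:ℕ) else 0)]
              congr 1
              have : ∀ s : Fin n, (if (e (i, some s)).1 = r then (1:ℕ) else 0)
                  = if (ρ i).succAbove s = r then 1 else 0 := fun s => rfl
              simp_rw [this]
              rw [← Finset.card_filter]
              convert count_succAbove' (ρ i) r (Equiv.refl (Fin n)) <;> rfl
            simp_rw [this]
            rw [Finset.sum_add_distrib]
            have hA : (∑ i : Fin (n+1), if i = r then (1:ℕ) else 0) = 1 := by simp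
            have hB : (∑ i : Fin (n+1), if r = ρ i then (0:ℕ) else 1) = n := sum_ite_ne ρ r
            omega
          · intro c
            rw [Finset.card_filter, Fintype.sum_prod_type]
            have : ∀ i : Fin (n+1),
                (∑ o : Option (Fin n), if (e (i, o)).2 = c then (1:ℕ) else 0) = 1 := by
              intro i
              rw [Fintype.sum_option (f := fun o : Option (Fin n) =>
                if (e (i, o)).2 = c then (1:ℕ) else 0)]
              have h1 : ∀ s : Fin n, (if (e (i, some s)).2 = c then (1:ℕ) else 0)
                  = if (t i).succAbove (τ i s) = c then 1 else 0 := fun s => rfl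
              simp_rw [h1]
              have h2 : (∑ s : Fin n, if (t i).succAbove (τ i s) = c then (1:ℕ) else 0)
                  = if c = t i then 0 else 1 := by
                rw [← Finset.card_filter]
                exact count_succAbove' (t i) c (τ i)
              rw [h2]
              show (if t i = c then (1:ℕ) else 0) + (if c = t i then 0 else 1) = 1
              by_cases h : t i = c
              · subst h; simp
              · simp [h, Ne.symm h]
            simp_rw [this]
            simp
  have part2 : tropPer (tropMul A (tropAdj A)) = (n+1) • tropPer A := by
    refine le_antisymm hup2 ?_
    rw [hp, coe_nsmul]
    push_cast
    exact hlo2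
  -- Part 3
  have part3 : tropPer (tropQInv A) = ((-p : ℝ) : Rmax) := by
    have hconst : ∀ i j, tropQInv A i j = tropAdj A i j + ((-p : ℝ) : Rmax) := by
      intro i j
      show tropAdj A i j + ((- ((tropPer A).unbotD 0) : ℝ) : Rmax) = _
      rw [hp]
      simp
    have h1 : tropPer (tropQInv A)
        = Finset.univ.sup fun σ : Equiv.Perm (Fin (n+1)) =>
            (∑ i, tropAdj A i (σ i)) + (n+1) • ((-p : ℝ) : Rmax) := by
      show (Finset.univ.sup fun σ : Equiv.Perm (Fin (n+1)) => ∑ i, tropQInv A i (σ i)) = _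
      congr 1
      funext σ
      simp_rw [hconst]
      rw [Finset.sum_add_distrib, Finset.sum_const]
      simp
    rw [h1, sup_add_const (fun σ : Equiv.Perm (Fin (n+1)) => ∑ i, tropAdj A i (σ i))]
    have h2 : (Finset.univ.sup fun σ : Equiv.Perm (Fin (n+1)) => ∑ i, tropAdj A i (σ i))
        = ((n * p : ℝ) : Rmax) := by
      have := part1
      rw [hp, coe_nsmul] at this
      exact this
    rw [h2, coe_nsmul, ← WithBot.coe_add]
    congr 1
    push_cast
    ring
  exact ⟨part1, part2, part3⟩
end
end
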